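/- arXiv:0801.1288 — 8 statements merged into one kernel-verified Lean document; each statement's English description precedes it below -/
import Mathlib

section
/- Let K be a field, V a finite-dimensional K-vector space of dimension n ≥ 1, and w : V → ℝ a function satisfying w(x + y) ≤ max(w(x), w(y)) for all x, y ∈ V and w(c·x) = w(x) for all x ∈ V and all nonzero scalars c ∈ K. Then: (a) for every real ρ with ρ ≥ w(0), the set Ω(ρ) := {x ∈ V : w(x) ≤ ρ} is a K-subspace of V; and (b) there exists a basis b_1, …, b_n of V such that for every real ρ ≥ w(0) one has #{k : w(b_k) ≤ ρ} = dim Ω(ρ), and such that for every basis b′_1, …, b′_n of V one has ∑_{k=1}^n w(b_k) ≤ ∑_{k=1}^n w(b′_k); that is, the basis b achieves the minimum possible total weight among all bases of V. -/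
/-- The absolute weight filtration: sublevel sets of a non-archimedean weight
function are subspaces, and the associated profile computes the minimum weight
of a basis. -/
theorem stmt1 (K : Type*) [Field K] (V : Type*) [AddCommGroup V] [Module K V]
    [FiniteDimensional K V] (n : ℕ) (hn : 1 ≤ n)
    (hrank : Module.finrank K V = n)
    (w : V → ℝ)
    (hadd : ∀ x y : V, w (x + y) ≤ max (w x) (w y))
    (hsmul : ∀ c : K, c ≠ 0 → ∀ x : V, w (c • x) = w x) :
    (∀ ρ : ℝ, w 0 ≤ ρ → ∃ Ω : Submodule K V, (Ω : Set V) = {x : V | w x ≤ ρ}) ∧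
    ∃ b : Module.Basis (Fin n) K V,
      (∀ ρ : ℝ, w 0 ≤ ρ →
        (Finset.univ.filter fun k : Fin n => w (b k) ≤ ρ).card =
          Module.finrank K (Submodule.span K {x : V | w x ≤ ρ})) ∧
      ∀ b' : Module.Basis (Fin n) K V, ∑ k, w (b k) ≤ ∑ k, w (b' k) := by
  classical
  haveI : Nonempty (Fin n) := ⟨⟨0, hn⟩⟩
  -- w 0 is the minimum value of w
  have hw0 : ∀ x : V, w 0 ≤ w x := by
    intro x
    have h1 : w ((-1 : K) • x) = w x := hsmul (-1) (by norm_num) x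
    have h2 : x + (-1 : K) • x = 0 := by rw [neg_one_smul]; exact add_neg_cancel x
    calc w 0 = w (x + (-1 : K) • x) := by rw [h2]
    _ ≤ max (w x) (w ((-1 : K) • x)) := hadd _ _
    _ = w x := by rw [h1, max_self]
  -- part (a)
  have hSub : ∀ ρ : ℝ, w 0 ≤ ρ → ∃ Ω : Submodule K V, (Ω : Set V) = {x : V | w x ≤ ρ} := by
    intro ρ hρ
    refine ⟨⟨⟨⟨{x : V | w x ≤ ρ}, ?_⟩, ?_⟩, ?_⟩, rfl⟩
    · intro a b ha hb
      exact le_trans (hadd a b) (max_le ha hb)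
    · exact hρ
    · intro c x hx
      by_cases hc : c = 0
      · simpa [hc] using hρ
      · simpa [hsmul c hc x] using hx
  refine ⟨hSub, ?_⟩
  -- the filtration
  set Ω : ℝ → Submodule K V := fun ρ => Submodule.span K {x : V | w x ≤ ρ} with hΩdef
  have mem_Om : ∀ ρ : ℝ, w 0 ≤ ρ → ∀ x : V, x ∈ Ω ρ ↔ w x ≤ ρ := by
    intro ρ hρ x
    obtain ⟨S, hS⟩ := hSub ρ hρ
    have hΩS : Ω ρ = S := by
      rw [hΩdef]; simp only; rw [← hS, Submodule.span_eq]
    rw [hΩS, ← SetLike.mem_coe, hS]; rfl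
  have Om_mono : ∀ {ρ ρ' : ℝ}, ρ ≤ ρ' → Ω ρ ≤ Ω ρ' := by
    intro ρ ρ' h
    exact Submodule.span_mono (fun x hx => le_trans hx h)
  -- lower bound on rank from independent families
  have rank_ge : ∀ (ρ : ℝ) (m : ℕ) (f : Fin m → V), LinearIndependent K f →
      (∀ j, f j ∈ Ω ρ) → m ≤ Module.finrank K (Ω ρ) := by
    intro ρ m f hf hmem
    have h1 : Submodule.span K (Set.range f) ≤ Ω ρ := by
      rw [Submodule.span_le]; rintro _ ⟨j, rfl⟩; exact hmem j
    have h2 := finrank_span_eq_card hf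
    have h3 := Submodule.finrank_mono h1
    rw [h2] at h3
    simpa using h3
  -- a level at which the filtration is full
  obtain ⟨e⟩ : Nonempty (Module.Basis (Fin n) K V) := ⟨Module.finBasisOfFinrankEq K V hrank⟩
  set R : ℝ := Finset.univ.sup' Finset.univ_nonempty (fun k : Fin n => w (e k)) with hRdef
  have hR0 : w 0 ≤ R := le_trans (hw0 (e ⟨0, hn⟩))
    (Finset.le_sup' (fun k : Fin n => w (e k)) (Finset.mem_univ ⟨0, hn⟩))
  have hRtop : n ≤ Module.finrank K (Ω R) := by
    apply rank_ge R n e e.linearIndependent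
    intro j
    rw [mem_Om R hR0]
    exact Finset.le_sup' (fun k : Fin n => w (e k)) (Finset.mem_univ j)
  -- finrank of any Ω ρ is at most n
  have rank_le_n : ∀ ρ : ℝ, Module.finrank K (Ω ρ) ≤ n := by
    intro ρ
    calc Module.finrank K (Ω ρ) ≤ Module.finrank K V := Submodule.finrank_le _
    _ = n := hrank
  -- jump values
  set S : ℕ → Set ℝ := fun i => {ρ | w 0 ≤ ρ ∧ i ≤ Module.finrank K (Ω ρ)} with hSdef
  have Sne : ∀ i, i ≤ n → (S i).Nonempty := fun i hi => ⟨R, hR0, le_trans hi hRtop⟩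
  have Sbdd : ∀ i, BddBelow (S i) := fun i => ⟨w 0, fun ρ hρ => hρ.1⟩
  set r : ℕ → ℝ := fun i => sInf (S i) with hrdef
  have r_le : ∀ i, ∀ ρ ∈ S i, r i ≤ ρ := fun i ρ hρ => csInf_le (Sbdd i) hρ
  have r0 : ∀ i, i ≤ n → w 0 ≤ r i := fun i hi => le_csInf (Sne i hi) (fun ρ hρ => hρ.1)
  -- the infimum is attained
  have r_mem : ∀ i, i ≤ n → r i ∈ S i := by
    intro i hi
    have hr0 : w 0 ≤ r i := r0 i hi
    -- take a level ρ₁ ∈ S i with minimal rank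
    set T : Set ℕ := (fun ρ => Module.finrank K (Ω ρ)) '' S i with hTdef
    have hTne : T.Nonempty := (Sne i hi).image _
    have hmT := Nat.sInf_mem hTne
    obtain ⟨ρ₁, hρ₁S, hρ₁m⟩ := hmT
    have min_sub : ∀ ρ ∈ S i, Ω ρ₁ ≤ Ω ρ := by
      intro ρ hρ
      rcases le_total ρ ρ₁ with h | h
      · have hle : Ω ρ ≤ Ω ρ₁ := Om_mono h
        have : Module.finrank K (Ω ρ₁) ≤ Module.finrank K (Ω ρ) := by
          have h' : Module.finrank K (Ω ρ₁) = sInf T := hρ₁m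
          rw [h']
          exact Nat.sInf_le ⟨ρ, hρ, rfl⟩
        rw [Submodule.eq_of_le_of_finrank_le hle this]
      · exact Om_mono h
    have hsub : Ω ρ₁ ≤ Ω (r i) := by
      intro x hx
      rw [mem_Om _ hr0]
      apply le_csInf (Sne i hi)
      intro ρ hρ
      exact (mem_Om ρ hρ.1 x).1 (min_sub ρ hρ hx)
    exact ⟨hr0, le_trans hρ₁S.2 (Submodule.finrank_mono hsub)⟩
  -- characterization of rank via r
  have key : ∀ i, i ≤ n → ∀ ρ, w 0 ≤ ρ →
      (i ≤ Module.finrank K (Ω ρ) ↔ r i ≤ ρ) := by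
    intro i hi ρ hρ
    constructor
    · intro h; exact r_le i ρ ⟨hρ, h⟩
    · intro h
      exact le_trans (r_mem i hi).2 (Submodule.finrank_mono (Om_mono h))
  -- construct an adapted independent family
  have hind : ∀ k : ℕ, k ≤ n → ∃ f : Fin k → V, LinearIndependent K f ∧
      ∀ j : Fin k, f j ∈ Ω (r (j.val + 1)) := by
    intro k
    induction k with
    | zero => exact fun _ => ⟨Fin.elim0, linearIndependent_empty_type, fun j => j.elim0⟩
    | succ k ih =>
      intro hk
      obtain ⟨f, hf, hmem⟩ := ih (Nat.le_of_succ_le hk)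
      have h1 : Module.finrank K (Submodule.span K (Set.range f)) = k := by
        rw [finrank_span_eq_card hf, Fintype.card_fin]
      have h2 : k + 1 ≤ Module.finrank K (Ω (r (k + 1))) := (r_mem (k + 1) hk).2
      have hnle : ¬ (Ω (r (k + 1)) ≤ Submodule.span K (Set.range f)) := by
        intro hle
        have := Submodule.finrank_mono hle
        omega
      rw [SetLike.not_le_iff_exists] at hnle
      obtain ⟨x, hxΩ, hxs⟩ := hnle
      refine ⟨Fin.snoc f x, linearIndependent_fin_snoc.2 ⟨hf, hxs⟩, ?_⟩
      intro j
      induction j using Fin.lastCases with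
      | last => simpa [Fin.snoc_last] using hxΩ
      | cast i => simpa [Fin.snoc_castSucc] using hmem i
  obtain ⟨f, hf, hmem⟩ := hind n le_rfl
  -- weights of f are exactly the jump values
  have hwf : ∀ m : ℕ, ∀ hm : m < n, w (f ⟨m, hm⟩) = r (m + 1) := by
    intro m
    induction m using Nat.strong_induction_on with
    | _ m ih =>
      intro hm
      have hle : w (f ⟨m, hm⟩) ≤ r (m + 1) := by
        have := hmem ⟨m, hm⟩
        rwa [mem_Om _ (r0 (m + 1) hm)] at this
      refine le_antisymm hle ?_
      by_contra hlt
      push_neg at hlt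
      set τ := w (f ⟨m, hm⟩) with hτdef
      have hτ0 : w 0 ≤ τ := hw0 _
      obtain ⟨d, hd⟩ : ∃ d, d = Module.finrank K (Ω τ) := ⟨_, rfl⟩
      have hdm : d ≤ m := by
        by_contra hdm
        push_neg at hdm
        have h1 : m + 1 ≤ Module.finrank K (Ω τ) := by omega
        have : r (m + 1) ≤ τ := (key (m + 1) hm τ hτ0).1 h1
        linarith
      -- build d + 1 independent vectors in Ω τ
      set E : Fin (d + 1) → Fin n := fun j =>
        if h : j.val < d then ⟨j.val, lt_trans (lt_of_lt_of_le h hdm) hm⟩ else ⟨m, hm⟩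
        with hEdef
      have hEinj : Function.Injective E := by
        intro a b hab
        rw [hEdef] at hab
        simp only at hab
        by_cases ha : a.val < d <;> by_cases hb : b.val < d <;>
          simp [ha, hb, Fin.ext_iff] at hab ⊢ <;> omega
      have hEmem : ∀ j : Fin (d + 1), f (E j) ∈ Ω τ := by
        intro j
        rw [mem_Om _ hτ0, hEdef]
        simp only
        by_cases h : j.val < d
        · rw [dif_pos h]
          rw [ih j.val (lt_of_lt_of_le h hdm) _]
          exact (key (j.val + 1) (by omega) τ hτ0).1 (by omega)
        · rw [dif_neg h]
      have := rank_ge τ (d + 1) (f ∘ E) (hf.comp E hEinj) (fun j => hEmem j)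
      omega
  -- the basis
  have hcard : Fintype.card (Fin n) = Module.finrank K V := by
    rw [Fintype.card_fin, hrank]
  set b : Module.Basis (Fin n) K V := basisOfLinearIndependentOfCardEqFinrank hf hcard with hbdef
  have hbf : ∀ k : Fin n, b k = f k := by
    intro k
    rw [hbdef, coe_basisOfLinearIndependentOfCardEqFinrank]
  have hwb : ∀ k : Fin n, w (b k) = r (k.val + 1) := by
    intro k
    rw [hbf k]
    exact hwf k.val k.isLt
  -- counting lemma
  have card_lt : ∀ d : ℕ, d ≤ n →
      (Finset.univ.filter fun k : Fin n => k.val < d).card = d := by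
    intro d hd
    rw [Finset.card_bij' (fun (k : Fin n) _ => k.val)
      (fun (a : ℕ) (ha : a ∈ Finset.range d) =>
        (⟨a, lt_of_lt_of_le (Finset.mem_range.1 ha) hd⟩ : Fin n))
      (fun k hk => Finset.mem_range.2 (Finset.mem_filter.1 hk).2)
      (fun a ha => Finset.mem_filter.2 ⟨Finset.mem_univ _, Finset.mem_range.1 ha⟩)
      (fun k _ => rfl) (fun a _ => rfl), Finset.card_range]
  refine ⟨b, ?_, ?_⟩
  · -- the profile computes dimensions
    intro ρ hρ
    have hd : Module.finrank K (Ω ρ) ≤ n := rank_le_n ρ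
    have : (Finset.univ.filter fun k : Fin n => w (b k) ≤ ρ) =
        (Finset.univ.filter fun k : Fin n => k.val < Module.finrank K (Ω ρ)) := by
      apply Finset.filter_congr
      intro k _
      rw [hwb k]
      constructor
      · intro h
        have := (key (k.val + 1) k.isLt ρ hρ).2 h
        omega
      · intro h
        exact (key (k.val + 1) k.isLt ρ hρ).1 (by omega)
    rw [this, card_lt _ hd]
  · -- minimality
    intro b'
    set g : Fin n → ℝ := fun k => w (b' k) with hgdef
    set σ := Tuple.sort g with hσdef
    have hmono : Monotone (g ∘ σ) := Tuple.monotone_sort g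
    have hsum : ∑ k, w (b' k) = ∑ k, g (σ k) := (Equiv.sum_comp σ g).symm
    rw [hsum]
    have hsb : ∑ k, w (b k) = ∑ k : Fin n, r (k.val + 1) :=
      Finset.sum_congr rfl (fun k _ => hwb k)
    rw [hsb]
    apply Finset.sum_le_sum
    intro k _
    have hτ0 : w 0 ≤ g (σ k) := hw0 _
    apply r_le (k.val + 1) _ ⟨hτ0, ?_⟩
    have hkn : k.val + 1 ≤ n := k.isLt
    apply rank_ge _ _ (fun j : Fin (k.val + 1) => b' (σ (Fin.castLE hkn j)))
    · exact b'.linearIndependent.comp _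
        (σ.injective.comp (Fin.castLE_injective hkn))
    · intro j
      rw [mem_Om _ hτ0]
      have : (g ∘ σ) (Fin.castLE hkn j) ≤ (g ∘ σ) k := by
        apply hmono
        rw [Fin.le_def]
        simpa using Nat.lt_succ_iff.1 j.isLt
      simpa [hgdef] using this
end

section
/- Let K be a field, W a finite-dimensional K-vector space with a basis (e_i)_{i ∈ ι} indexed by a finite set ι, and ω : ι → ℝ a weight function on the basis indices. Let φ : W → U be a surjective K-linear map onto a finite-dimensional K-vector space U of dimension P ≥ 1. For a nonzero u ∈ U, define wt(u) := min over nonzero p ∈ W with φ(p) = u of max_{i ∈ supp(p)} ω_i, where supp(p) ⊆ ι is the set of indices at which the coordinate of p in the basis (e_i) is nonzero (this minimum exists since only finitely many values max_{i ∈ supp(p)} ω_i occur). Then for every basis q_1, …, q_P of U there exists a subset S ⊆ ι such that (φ(e_i))_{i ∈ S} is a basis of U and ∑_{i ∈ S} ω_i ≤ ∑_{k=1}^{P} wt(q_k). -/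
/-- The curve basis lemma: given any basis of the target of a surjection,
there is a set of images of weighted basis vectors forming a basis of the
target whose total weight is at most the total weight of the given basis. -/
theorem stmt4 {K W U ι : Type*} [Field K] [AddCommGroup W] [Module K W]
    [AddCommGroup U] [Module K U] [Fintype ι]
    (e : Module.Basis ι K W) (ω : ι → ℝ)
    (φ : W →ₗ[K] U) (hφ : Function.Surjective φ)
    (P : ℕ) (hP : 1 ≤ P) (hU : Module.finrank K U = P)
    (wt : U → ℝ)
    (hwt : ∀ u : U, u ≠ 0 →
      IsLeast {t : ℝ | ∃ p : W, p ≠ 0 ∧ φ p = u ∧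
        ∃ hne : ((e.repr p).support).Nonempty,
          t = ((e.repr p).support).sup' hne ω} (wt u))
    (q : Module.Basis (Fin P) K U) :
    ∃ S : Finset ι, ∃ bU : Module.Basis {i // i ∈ S} K U,
      (∀ i : {i // i ∈ S}, bU i = φ (e (i : ι))) ∧
      ∑ i ∈ S, ω i ≤ ∑ k, wt (q k) := by
  classical
  have hfd : FiniteDimensional K U :=
    FiniteDimensional.of_finrank_pos (by omega)
  set f : ι → U := fun i => φ (e i) with hf
  set σ : Equiv.Perm (Fin P) := Tuple.sort (fun k => wt (q k)) with hσ
  have hmono : Monotone ((fun k => wt (q k)) ∘ σ) := Tuple.monotone_sort _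
  -- each q k lies in the span of the images of basis vectors of weight ≤ wt (q k)
  have hspan : ∀ k : Fin P,
      q k ∈ Submodule.span K (f '' {i | ω i ≤ wt (q k)}) := by
    intro k
    obtain ⟨p, hp0, hpq, hne, hval⟩ := (hwt (q k) (q.ne_zero k)).1
    have h1 : p ∈ Submodule.span K (e '' ((e.repr p).support : Set ι)) :=
      e.mem_span_repr_support p
    have h2 : φ p ∈ Submodule.map φ (Submodule.span K (e '' ((e.repr p).support : Set ι))) :=
      Submodule.mem_map_of_mem h1
    rw [Submodule.map_span] at h2
    have h3 : q k ∈ Submodule.span K (f '' ((e.repr p).support : Set ι)) := by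
      rw [hf, ← Set.image_image]
      exact hpq ▸ h2
    refine Submodule.span_mono ?_ h3
    rintro _ ⟨i, hi, rfl⟩
    refine ⟨i, ?_, rfl⟩
    rw [hval]
    exact Finset.le_sup' ω hi
  -- weight sum target, as a function of ℕ
  set g : ℕ → ℝ := fun j => if h : j < P then wt (q (σ ⟨j, h⟩)) else 0 with hg
  -- inductive construction of an independent family of images of basis vectors
  have key : ∀ r : ℕ, r ≤ P → ∃ S : Finset ι, S.card = r ∧
      LinearIndependent K (fun i : {i // i ∈ S} => f i) ∧
      ∑ i ∈ S, ω i ≤ ∑ j ∈ Finset.range r, g j := by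
    intro r
    induction r with
    | zero => exact fun _ => ⟨∅, rfl, linearIndependent_empty_type, by simp⟩
    | succ r ih =>
      intro hr1
      obtain ⟨S, hcard, hli, hsum⟩ := ih (Nat.le_of_succ_le hr1)
      set c := wt (q (σ ⟨r, hr1⟩)) with hc
      -- find a new vector of weight ≤ c outside the current span
      have hex : ∃ i₀, ω i₀ ≤ c ∧ f i₀ ∉ Submodule.span K (f '' (S : Set ι)) := by
        by_contra hcon
        push_neg at hcon
        have hAle : Submodule.span K (f '' {i | ω i ≤ c}) ≤
            Submodule.span K (f '' (S : Set ι)) := by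
          rw [Submodule.span_le]
          rintro _ ⟨i, hi, rfl⟩
          exact hcon i hi
        -- lower bound : the q (σ j), j ≤ r, are r+1 independent vectors in the big span
        set V := Submodule.span K (f '' {i | ω i ≤ c}) with hV
        have hqV : ∀ j : Fin (r + 1), q (σ ⟨(j : ℕ), lt_of_lt_of_le j.2 hr1⟩) ∈ V := by
          intro j
          refine Submodule.span_mono ?_ (hspan (σ ⟨(j : ℕ), lt_of_lt_of_le j.2 hr1⟩))
          have hle : wt (q (σ ⟨(j : ℕ), lt_of_lt_of_le j.2 hr1⟩)) ≤ c :=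
            hmono (show (⟨(j : ℕ), lt_of_lt_of_le j.2 hr1⟩ : Fin P) ≤ ⟨r, hr1⟩ from
              Fin.mk_le_mk.mpr (Nat.lt_succ_iff.mp j.2))
          exact Set.image_mono fun i hi => le_trans hi hle
        set emb : Fin (r + 1) → Fin P := fun j => ⟨(j : ℕ), lt_of_lt_of_le j.2 hr1⟩ with hemb
        have hembinj : Function.Injective emb := by
          intro a b hab
          simpa [hemb, Fin.ext_iff] using congrArg Fin.val hab
        have hqli : LinearIndependent K (fun j : Fin (r + 1) => q (σ (emb j))) :=
          q.linearIndependent.comp (σ ∘ emb) ((σ.injective).comp hembinj)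
        have hVli : LinearIndependent K (fun j : Fin (r + 1) =>
            (⟨q (σ (emb j)), hqV j⟩ : V)) := by
          apply LinearIndependent.of_comp V.subtype
          exact hqli
        have hlow : r + 1 ≤ Module.finrank K V := by
          simpa using hVli.fintype_card_le_finrank
        -- upper bound : span of images of S has finrank ≤ r
        have hup : Module.finrank K (Submodule.span K (f '' (S : Set ι))) ≤ r := by
          have h1 : Module.finrank K (Submodule.span K ((S.image f : Finset U) : Set U)) ≤
              (S.image f).card := finrank_span_finset_le_card (S.image f)
          rw [Finset.coe_image] at h1
          exact le_trans h1 (le_trans (Finset.card_image_le) (le_of_eq hcard))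
        have := le_trans hlow (le_trans (Submodule.finrank_mono hAle) hup)
        omega
      obtain ⟨i₀, hi₀w, hi₀⟩ := hex
      have hi₀S : i₀ ∉ S := fun h =>
        hi₀ (Submodule.subset_span ⟨i₀, h, rfl⟩)
      -- injectivity on S
      have hinjS : Set.InjOn f (S : Set ι) := by
        intro a ha b hb hab
        have h2 : (⟨a, ha⟩ : {i // i ∈ S}) = ⟨b, hb⟩ := hli.injective hab
        exact Subtype.mk_eq_mk.mp h2
      have hsetli : LinearIndependent K (fun x : (f '' (S : Set ι)) => (x : U)) :=
        (linearIndepOn_iff_image hinjS).mp hli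
      have hsetli' := LinearIndepOn.id_insert hsetli hi₀
      have himg : f '' ((insert i₀ S : Finset ι) : Set ι) =
          insert (f i₀) (f '' (S : Set ι)) := by
        rw [Finset.coe_insert, Set.image_insert_eq]
      have hinj' : Set.InjOn f ((insert i₀ S : Finset ι) : Set ι) := by
        intro a ha b hb hab
        rw [Finset.coe_insert, Set.mem_insert_iff] at ha hb
        rcases ha with rfl | ha
        · rcases hb with rfl | hb
          · rfl
          · exact absurd (show f a ∈ Submodule.span K (f '' (S : Set ι)) by
              rw [hab]; exact Submodule.subset_span ⟨b, hb, rfl⟩) hi₀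
        · rcases hb with rfl | hb
          · exact absurd (show f b ∈ Submodule.span K (f '' (S : Set ι)) by
              rw [← hab]; exact Submodule.subset_span ⟨a, ha, rfl⟩) hi₀
          · exact hinjS ha hb hab
      refine ⟨insert i₀ S, ?_, ?_, ?_⟩
      · rw [Finset.card_insert_of_notMem hi₀S, hcard]
      · exact (linearIndepOn_iff_image hinj').mpr (himg ▸ hsetli')
      · rw [Finset.sum_insert hi₀S, Finset.sum_range_succ]
        have hgr : g r = c := by simp only [hg, hc]; exact dif_pos hr1
        rw [add_comm (∑ j ∈ Finset.range r, g j) (g r), hgr]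
        exact add_le_add hi₀w hsum
  obtain ⟨S, hcard, hli, hsum⟩ := key P le_rfl
  have hne : Nonempty {i // i ∈ S} :=
    Finset.nonempty_coe_sort.mpr (Finset.card_pos.mp (by omega))
  have hfincard : Fintype.card {i // i ∈ S} = Module.finrank K U := by
    rw [Fintype.card_coe, hcard, hU]
  refine ⟨S, basisOfLinearIndependentOfCardEqFinrank hli hfincard, fun i => ?_, ?_⟩
  · rw [coe_basisOfLinearIndependentOfCardEqFinrank]
  · refine le_trans hsum ?_
    have h1 : ∑ j ∈ Finset.range P, g j = ∑ k : Fin P, wt (q (σ k)) := by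
      rw [← Fin.sum_univ_eq_sum_range]
      refine Finset.sum_congr rfl fun k _ => ?_
      rw [hg]
      simp only [k.2, dif_pos]
    rw [h1]
    exact le_of_eq (Equiv.sum_comp σ fun k => wt (q k))
end

section
/- With the combinatorial data and notation of the context, the following inequality holds (the paper's Lemma 'creep'): L ≤ ∑_{j=0}^{N̄} Z_j · r_j. -/
private lemma aux_tel (r : ℕ → ℝ) (a n : ℕ) (h : a ≤ n) :
    ∑ j ∈ Finset.Ico a n, (r j - r (j+1)) = r a - r n := by
  induction n, h using Nat.le_induction with
  | base => simp
  | succ n h ih =>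
    rw [Finset.sum_Ico_succ_top (by omega), ih]; ring

private lemma aux_tel2 (f : ℕ → ℝ) (m : ℕ) :
    ∑ ℓ ∈ Finset.Ico 1 (m+1), (f (ℓ+1) - f (ℓ-1)) = f (m+1) + f m - f 1 - f 0 := by
  induction m with
  | zero => simp
  | succ m ih =>
    rw [Finset.sum_Ico_succ_top (by omega), ih]
    simp only [Nat.add_sub_cancel]
    ring

/-- The paper's Lemma `creep`: the weighted sum of jump contributions is
bounded by `∑ Z_j r_j`. -/
theorem stmt7 (Nbar q g N : ℕ) (hNbar : 1 ≤ Nbar) (hq : 1 ≤ q) (hgN : g ≤ N)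
    (z : ℕ → ℕ) (hz : ∀ j ≤ Nbar, 1 ≤ z j)
    (r : ℕ → ℝ) (hrdec : ∀ j < Nbar, r (j + 1) < r j) (hrN : r Nbar = 0)
    (c : ℕ → Fin q → ℕ)
    (hc0 : ∀ i : Fin q, c 0 i = 0)
    (hcmono : ∀ j < Nbar, ∀ i : Fin q, c j i ≤ c (j + 1) i)
    (β : Fin q → ℝ) (hβ0 : ∀ i : Fin q, 0 ≤ β i) (hβh : ∀ i : Fin q, β i ≤ 1 / 2)
    (hRR : ∀ j, 1 ≤ j → j ≤ Nbar →
      ∑ τ ∈ Finset.range j, z τ ≤ N - g →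
      ∑ i : Fin q, c j i ≤ ∑ τ ∈ Finset.range j, z τ)
    (hCliff : ∀ j, 1 ≤ j → j ≤ Nbar →
      N - g < ∑ τ ∈ Finset.range j, z τ →
      ((∑ i : Fin q, c j i : ℕ) : ℤ) ≤
        2 * (∑ τ ∈ Finset.range j, (z τ : ℤ)) - ((N : ℤ) - (g : ℤ)))
    (jRR : ℕ) (hjRR1 : jRR ≤ Nbar)
    (hjRR2 : ∑ τ ∈ Finset.range jRR, z τ ≤ N - g)
    (hjRR3 : ∀ j ≤ Nbar, ∑ τ ∈ Finset.range j, z τ ≤ N - g → j ≤ jRR)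
    (K : Fin q → ℕ) (jf : Fin q → ℕ → ℕ)
    (henum : ∀ i : Fin q, 0 < c Nbar i →
      1 ≤ K i ∧
      jf i (K i) = Nbar ∧
      (∀ ℓ ℓ', ℓ < ℓ' → ℓ' < K i → jf i ℓ < jf i ℓ') ∧
      (∀ ℓ < K i, jf i ℓ < Nbar ∧ c (jf i ℓ) i < c (jf i ℓ + 1) i) ∧
      (∀ j < Nbar, c j i < c (j + 1) i → ∃ ℓ < K i, jf i ℓ = j)) :
    (∑ i ∈ Finset.univ.filter (fun i : Fin q => 0 < c Nbar i),
      ((1 / 2 * (c (jf i 1) i : ℝ) + β i) * r (jf i 0) +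
        ∑ ℓ ∈ Finset.Ico 1 (K i),
          1 / 2 * ((c (jf i (ℓ + 1)) i : ℝ) - (c (jf i (ℓ - 1)) i : ℝ)) * r (jf i ℓ)))
    ≤ ∑ j ∈ Finset.range (Nbar + 1),
        (if j < jRR then (z j : ℝ)
         else if j = jRR then
           (z j : ℝ) + ((∑ τ ∈ Finset.range (jRR + 1), (z τ : ℝ)) - ((N : ℝ) - (g : ℝ)))
         else 2 * (z j : ℝ)) * r j := by
  classical
  set F := Finset.univ.filter (fun i : Fin q => 0 < c Nbar i) with hF
  set d : ℕ → ℝ := fun j => r j - r (j+1) with hd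
  set w : Fin q → ℕ → ℝ := fun i ℓ =>
    if ℓ = 0 then 1 / 2 * (c (jf i 1) i : ℝ) + β i
    else 1 / 2 * ((c (jf i (ℓ+1)) i : ℝ) - (c (jf i (ℓ-1)) i : ℝ)) with hw
  set Zr : ℕ → ℝ := fun j =>
    if j < jRR then (z j : ℝ)
    else if j = jRR then
      (z j : ℝ) + ((∑ τ ∈ Finset.range (jRR + 1), (z τ : ℝ)) - ((N : ℝ) - (g : ℝ)))
    else 2 * (z j : ℝ) with hZr
  have hd0 : ∀ j < Nbar, 0 ≤ d j := by
    intro j hj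
    have := hrdec j hj
    simp only [hd]; linarith
  have hrtel : ∀ a ≤ Nbar, r a = ∑ j ∈ Finset.range Nbar, if a ≤ j then d j else 0 := by
    intro a ha
    have h1 : (Finset.range Nbar).filter (fun j => a ≤ j) = Finset.Ico a Nbar := by
      ext x
      simp only [Finset.mem_filter, Finset.mem_range, Finset.mem_Ico]
      omega
    rw [← Finset.sum_filter, h1, hd]
    rw [aux_tel r a Nbar ha, hrN, sub_zero]
  -- monotonicity of c up to Nbar
  have hcm : ∀ i : Fin q, ∀ a b, a ≤ b → b ≤ Nbar → c a i ≤ c b i := by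
    intro i a b hab
    induction b, hab using Nat.le_induction with
    | base => intro _; exact le_refl _
    | succ b hab ih =>
      intro hb
      exact le_trans (ih (by omega)) (hcmono b (by omega) i)
  have hconst : ∀ i : Fin q, ∀ a b, a ≤ b → b ≤ Nbar →
      (∀ t, a ≤ t → t < b → ¬ c t i < c (t+1) i) → c a i = c b i := by
    intro i a b hab
    induction b, hab using Nat.le_induction with
    | base => intro _ _; rfl
    | succ b hab ih =>
      intro hb hnj
      have h1 : c a i = c b i := ih (by omega) (fun t ht htb => hnj t ht (by omega))
      have h2 : c b i ≤ c (b+1) i := hcmono b (by omega) i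
      have h3 : ¬ c b i < c (b+1) i := hnj b hab (by omega)
      omega
  -- the key bound on partial weight sums
  have hS : ∀ j < Nbar, ∀ i ∈ F,
      (∑ ℓ ∈ Finset.range (K i), if jf i ℓ ≤ j then w i ℓ else 0) ≤ (c (j+1) i : ℝ) := by
    intro j hj i hi
    obtain ⟨hK, hjfK, hmono, hjump, hsurj⟩ := henum i ((Finset.mem_filter.1 hi).2)
    by_cases hex : jf i 0 ≤ j
    · -- nonempty case
      set T := (Finset.range (K i)).filter (fun ℓ => jf i ℓ ≤ j) with hT
      have hTne : T.Nonempty := ⟨0, by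
        simp only [hT, Finset.mem_filter, Finset.mem_range]
        exact ⟨hK, hex⟩⟩
      set m := T.max' hTne with hm
      have hmT : m ∈ T := T.max'_mem hTne
      have hmK : m < K i := (Finset.mem_filter.1 hmT).1 |> Finset.mem_range.1
      have hmj : jf i m ≤ j := (Finset.mem_filter.1 hmT).2
      have hmax : ∀ ℓ ∈ T, ℓ ≤ m := fun ℓ hℓ => T.le_max' ℓ hℓ
      have hTeq : T = Finset.range (m+1) := by
        ext ℓ
        simp only [hT, Finset.mem_filter, Finset.mem_range]
        constructor
        · rintro ⟨h1, h2⟩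
          have := hmax ℓ (by simp [hT, Finset.mem_filter, Finset.mem_range]; exact ⟨h1, h2⟩)
          omega
        · intro hℓ
          have hℓK : ℓ < K i := by omega
          refine ⟨hℓK, ?_⟩
          rcases Nat.lt_or_ge ℓ m with h | h
          · exact le_trans (le_of_lt (hmono ℓ m h hmK)) hmj
          · have : ℓ = m := by omega
            rw [this]; exact hmj
      have hsum : (∑ ℓ ∈ Finset.range (K i), if jf i ℓ ≤ j then w i ℓ else 0)
          = ∑ ℓ ∈ Finset.range (m+1), w i ℓ := by
        rw [← Finset.sum_filter, ← hT, hTeq]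
      rw [hsum]
      -- split off ℓ = 0 and telescope
      have hsplit : ∑ ℓ ∈ Finset.range (m+1), w i ℓ
          = w i 0 + ∑ ℓ ∈ Finset.Ico 1 (m+1), w i ℓ := by
        rw [Finset.range_eq_Ico, Finset.sum_eq_sum_Ico_succ_bot (by omega)]
      have hwtel : ∑ ℓ ∈ Finset.Ico 1 (m+1), w i ℓ
          = 1/2 * ((c (jf i (m+1)) i : ℝ) + (c (jf i m) i : ℝ)
              - (c (jf i 1) i : ℝ) - (c (jf i 0) i : ℝ)) := by
        have : ∀ ℓ ∈ Finset.Ico 1 (m+1), w i ℓ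
            = 1/2 * (((fun t => (c (jf i t) i : ℝ)) (ℓ+1)) - ((fun t => (c (jf i t) i : ℝ)) (ℓ-1))) := by
          intro ℓ hℓ
          have hℓ1 : ℓ ≠ 0 := by
            simp only [Finset.mem_Ico] at hℓ; omega
          simp only [hw, if_neg hℓ1]
        rw [Finset.sum_congr rfl this, ← Finset.mul_sum,
          aux_tel2 (fun t => (c (jf i t) i : ℝ)) m]
      -- jf i (m+1) facts
      have hub : j + 1 ≤ jf i (m+1) ∧ jf i (m+1) ≤ Nbar := by
        by_cases hmm : m + 1 < K i
        · constructor
          · by_contra h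
            push_neg at h
            have : m + 1 ∈ T := by
              simp only [hT, Finset.mem_filter, Finset.mem_range]
              exact ⟨hmm, by omega⟩
            have := hmax _ this
            omega
          · exact le_of_lt (hjump (m+1) hmm).1
        · have : m + 1 = K i := by omega
          rw [this, hjfK]
          exact ⟨by omega, le_refl _⟩
      -- c (j+1) i = c (jf i (m+1)) i
      have hbeq : c (j+1) i = c (jf i (m+1)) i := by
        apply hconst i (j+1) (jf i (m+1)) hub.1 hub.2
        intro t ht htlt hjt
        obtain ⟨ℓ, hℓK, hℓeq⟩ := hsurj t (by omega) hjt
        have hℓm : m < ℓ := by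
          by_contra h'
          push_neg at h'
          have : jf i ℓ ≤ jf i m := by
            rcases Nat.lt_or_ge ℓ m with h'' | h''
            · exact le_of_lt (hmono ℓ m h'' hmK)
            · have : ℓ = m := by omega
              rw [this]
          omega
        have : jf i (m+1) ≤ jf i ℓ := by
          rcases Nat.lt_or_ge (m+1) ℓ with h'' | h''
          · exact le_of_lt (hmono (m+1) ℓ h'' hℓK)
          · have : m + 1 = ℓ := by omega
            rw [this]
        omega
      -- c (jf i m) i < c (j+1) i
      have hlb : c (jf i m) i + 1 ≤ c (j+1) i := by
        have h1 : c (jf i m) i < c (jf i m + 1) i := (hjump m hmK).2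
        have h2 : c (jf i m + 1) i ≤ c (j+1) i := hcm i _ _ (by omega) (by omega)
        omega
      have hw0 : w i 0 = 1 / 2 * (c (jf i 1) i : ℝ) + β i := by simp [hw]
      rw [hsplit, hwtel, hw0]
      have hlbR : (c (jf i m) i : ℝ) + 1 ≤ (c (j+1) i : ℝ) := by exact_mod_cast hlb
      have hbeqR : (c (jf i (m+1)) i : ℝ) = (c (j+1) i : ℝ) := by exact_mod_cast hbeq.symm
      have hf0 : (0:ℝ) ≤ (c (jf i 0) i : ℝ) := Nat.cast_nonneg _
      have hβ := hβh i
      rw [hbeqR]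
      linarith
    · -- empty case: all terms vanish
      have : (∑ ℓ ∈ Finset.range (K i), if jf i ℓ ≤ j then w i ℓ else 0) = 0 := by
        apply Finset.sum_eq_zero
        intro ℓ hℓ
        have hℓK : ℓ < K i := Finset.mem_range.1 hℓ
        have : jf i 0 ≤ jf i ℓ := by
          rcases Nat.eq_zero_or_pos ℓ with h | h
          · rw [h]
          · exact le_of_lt (hmono 0 ℓ h hℓK)
        rw [if_neg (by omega)]
      rw [this]
      exact Nat.cast_nonneg _
  -- partial sums of Z dominate ∑ c (j+1)
  have hB : ∀ j < Nbar, ((∑ i : Fin q, c (j+1) i : ℕ) : ℝ) ≤ ∑ τ ∈ Finset.range (j+1), Zr τ := by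
    intro j hj
    rcases Nat.lt_or_ge j jRR with hcase | hcase
    · -- Riemann-Roch regime
      have hBeq : ∑ τ ∈ Finset.range (j+1), Zr τ = ∑ τ ∈ Finset.range (j+1), (z τ : ℝ) := by
        apply Finset.sum_congr rfl
        intro τ hτ
        have : τ < jRR := by
          have := Finset.mem_range.1 hτ; omega
        simp [hZr, this]
      have hsub : ∑ τ ∈ Finset.range (j+1), z τ ≤ N - g := by
        calc ∑ τ ∈ Finset.range (j+1), z τ
            ≤ ∑ τ ∈ Finset.range jRR, z τ :=
              Finset.sum_le_sum_of_subset (Finset.range_subset_range.2 (by omega))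
          _ ≤ N - g := hjRR2
      have := hRR (j+1) (by omega) (by omega) hsub
      rw [hBeq]
      calc ((∑ i : Fin q, c (j+1) i : ℕ) : ℝ) ≤ ((∑ τ ∈ Finset.range (j+1), z τ : ℕ) : ℝ) := by
            exact_mod_cast this
        _ = ∑ τ ∈ Finset.range (j+1), (z τ : ℝ) := by push_cast; ring
    · -- Clifford regime
      have hBeq : ∀ j', jRR ≤ j' → ∑ τ ∈ Finset.range (j'+1), Zr τ
          = 2 * (∑ τ ∈ Finset.range (j'+1), (z τ : ℝ)) - ((N : ℝ) - (g : ℝ)) := by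
        intro j' hj'
        induction j', hj' using Nat.le_induction with
        | base =>
          rw [Finset.sum_range_succ]
          have h1 : ∑ τ ∈ Finset.range jRR, Zr τ = ∑ τ ∈ Finset.range jRR, (z τ : ℝ) := by
            apply Finset.sum_congr rfl
            intro τ hτ
            have : τ < jRR := Finset.mem_range.1 hτ
            simp [hZr, this]
          have h2 : Zr jRR = (z jRR : ℝ)
              + ((∑ τ ∈ Finset.range (jRR + 1), (z τ : ℝ)) - ((N : ℝ) - (g : ℝ))) := by
            simp [hZr]
          rw [h1, h2, Finset.sum_range_succ]
          ring
        | succ j' hj' ih =>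
          rw [Finset.sum_range_succ Zr (j'+1), ih]
          have h2 : Zr (j'+1) = 2 * (z (j'+1) : ℝ) := by
            have hn1 : ¬ (j'+1 < jRR) := by omega
            have hn2 : ¬ (j'+1 = jRR) := by omega
            simp [hZr, hn1, hn2]
          rw [h2, Finset.sum_range_succ _ (j'+1)]
          ring
      rw [hBeq j hcase]
      have hgt : N - g < ∑ τ ∈ Finset.range (j+1), z τ := by
        by_contra h
        push_neg at h
        have := hjRR3 (j+1) (by omega) h
        omega
      have := hCliff (j+1) (by omega) (by omega) hgt
      exact_mod_cast this
  -- rewrite LHS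
  have hLHS : (∑ i ∈ F,
      ((1 / 2 * (c (jf i 1) i : ℝ) + β i) * r (jf i 0) +
        ∑ ℓ ∈ Finset.Ico 1 (K i),
          1 / 2 * ((c (jf i (ℓ + 1)) i : ℝ) - (c (jf i (ℓ - 1)) i : ℝ)) * r (jf i ℓ)))
      = ∑ j ∈ Finset.range Nbar,
          (∑ i ∈ F, ∑ ℓ ∈ Finset.range (K i), if jf i ℓ ≤ j then w i ℓ else 0) * d j := by
    have step1 : ∀ i ∈ F,
        ((1 / 2 * (c (jf i 1) i : ℝ) + β i) * r (jf i 0) +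
          ∑ ℓ ∈ Finset.Ico 1 (K i),
            1 / 2 * ((c (jf i (ℓ + 1)) i : ℝ) - (c (jf i (ℓ - 1)) i : ℝ)) * r (jf i ℓ))
        = ∑ ℓ ∈ Finset.range (K i), w i ℓ * r (jf i ℓ) := by
      intro i hi
      obtain ⟨hK, _, _, _, _⟩ := henum i ((Finset.mem_filter.1 hi).2)
      have h0 : w i 0 = 1 / 2 * (c (jf i 1) i : ℝ) + β i := by simp [hw]
      have hrest : ∀ ℓ ∈ Finset.Ico 1 (K i),
          1 / 2 * ((c (jf i (ℓ + 1)) i : ℝ) - (c (jf i (ℓ - 1)) i : ℝ)) * r (jf i ℓ)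
          = w i ℓ * r (jf i ℓ) := by
        intro ℓ hℓ
        have hℓ1 : ℓ ≠ 0 := by
          simp only [Finset.mem_Ico] at hℓ; omega
        simp [hw, hℓ1]
      rw [Finset.sum_congr rfl hrest, Finset.range_eq_Ico,
        Finset.sum_eq_sum_Ico_succ_bot (by omega : 0 < K i), h0]
    rw [Finset.sum_congr rfl step1]
    have step2 : ∀ i ∈ F, ∑ ℓ ∈ Finset.range (K i), w i ℓ * r (jf i ℓ)
        = ∑ j ∈ Finset.range Nbar, ∑ ℓ ∈ Finset.range (K i),
            if jf i ℓ ≤ j then w i ℓ * d j else 0 := by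
      intro i hi
      obtain ⟨_, _, _, hjump, _⟩ := henum i ((Finset.mem_filter.1 hi).2)
      rw [Finset.sum_comm]
      apply Finset.sum_congr rfl
      intro ℓ hℓ
      rw [hrtel (jf i ℓ) (le_of_lt (hjump ℓ (Finset.mem_range.1 hℓ)).1), Finset.mul_sum]
      apply Finset.sum_congr rfl
      intro j hj
      rw [mul_ite, mul_zero]
    rw [Finset.sum_congr rfl step2, Finset.sum_comm]
    apply Finset.sum_congr rfl
    intro j hj
    rw [Finset.sum_mul]
    apply Finset.sum_congr rfl
    intro i hi
    rw [Finset.sum_mul]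
    apply Finset.sum_congr rfl
    intro ℓ hℓ
    by_cases hij : jf i ℓ ≤ j
    · by_cases h0 : ℓ = 0 <;> simp [hw, h0, hij]
    · simp [hij]
  -- rewrite RHS
  have hRHS : (∑ j ∈ Finset.range (Nbar + 1), Zr j * r j)
      = ∑ j ∈ Finset.range Nbar, (∑ τ ∈ Finset.range (j+1), Zr τ) * d j := by
    have step1 : ∀ j ∈ Finset.range (Nbar+1), Zr j * r j
        = ∑ j' ∈ Finset.range Nbar, if j ≤ j' then Zr j * d j' else 0 := by
      intro j hj
      rw [hrtel j (by have := Finset.mem_range.1 hj; omega), Finset.mul_sum]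
      apply Finset.sum_congr rfl
      intro j' hj'
      rw [mul_ite, mul_zero]
    rw [Finset.sum_congr rfl step1, Finset.sum_comm]
    apply Finset.sum_congr rfl
    intro j' hj'
    have hj'' : j' < Nbar := Finset.mem_range.1 hj'
    have hfil : (Finset.range (Nbar+1)).filter (fun j => j ≤ j') = Finset.range (j'+1) := by
      ext x
      simp only [Finset.mem_filter, Finset.mem_range]
      omega
    rw [← Finset.sum_filter, hfil, ← Finset.sum_mul]
  -- convert the stated RHS to Zr form
  have hgoal : (∑ j ∈ Finset.range (Nbar + 1),
        (if j < jRR then (z j : ℝ)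
         else if j = jRR then
           (z j : ℝ) + ((∑ τ ∈ Finset.range (jRR + 1), (z τ : ℝ)) - ((N : ℝ) - (g : ℝ)))
         else 2 * (z j : ℝ)) * r j)
      = ∑ j ∈ Finset.range (Nbar + 1), Zr j * r j := by
    apply Finset.sum_congr rfl
    intro j _
    simp only [hZr]
  rw [hgoal, hRHS]
  refine le_trans (le_of_eq hLHS) ?_
  apply Finset.sum_le_sum
  intro j hj
  have hjN : j < Nbar := Finset.mem_range.1 hj
  refine mul_le_mul_of_nonneg_right ?_ (hd0 j hjN)
  calc (∑ i ∈ F, ∑ ℓ ∈ Finset.range (K i), if jf i ℓ ≤ j then w i ℓ else 0)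
      ≤ ∑ i ∈ F, (c (j+1) i : ℝ) := Finset.sum_le_sum (fun i hi => hS j hjN i hi)
    _ ≤ ∑ i : Fin q, (c (j+1) i : ℝ) := by
        apply Finset.sum_le_sum_of_subset_of_nonneg (Finset.filter_subset _ _)
        intro i _ _
        exact Nat.cast_nonneg _
    _ = ((∑ i : Fin q, c (j+1) i : ℕ) : ℝ) := by push_cast; ring
    _ ≤ ∑ τ ∈ Finset.range (j+1), Zr τ := hB j hjN
end

section
/- Let M ≥ 1 be an integer and let c_0 ≤ c_1 ≤ ⋯ ≤ c_M be natural numbers with c_0 = 0 and c_M ≥ 1. Let j(0) < j(1) < ⋯ < j(K−1) enumerate the set {j ∈ {0,…,M−1} : c_j < c_{j+1}} (so K ≥ 1), with the convention j(K) := M. Then for every real β with 0 ≤ β ≤ 1/2 and every J ∈ {0,…,M−1} with j(0) ≤ J, one has (½·c_{j(1)} + β) + ∑ over ℓ with 1 ≤ ℓ ≤ K−1 and j(ℓ) ≤ J of ½·(c_{j(ℓ+1)} − c_{j(ℓ−1)}) ≤ c_{J+1}. -/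
/-- The telescoping estimate from the proof of Lemma `creep`: the weighted
contribution of the jumps occurring at rows up to `J` is bounded by the value
of the sequence at row `J + 1`. -/
theorem stmt8 (M : ℕ) (hM : 1 ≤ M) (c : ℕ → ℕ)
    (hcmono : ∀ j < M, c j ≤ c (j + 1)) (hc0 : c 0 = 0) (hcM : 1 ≤ c M)
    (Kn : ℕ) (jf : ℕ → ℕ)
    (hK : 1 ≤ Kn)
    (hjlast : jf Kn = M)
    (hjmono : ∀ ℓ ℓ', ℓ < ℓ' → ℓ' < Kn → jf ℓ < jf ℓ')
    (hjjump : ∀ ℓ < Kn, jf ℓ < M ∧ c (jf ℓ) < c (jf ℓ + 1))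
    (hjall : ∀ j < M, c j < c (j + 1) → ∃ ℓ < Kn, jf ℓ = j)
    (β : ℝ) (hβ0 : 0 ≤ β) (hβh : β ≤ 1 / 2)
    (J : ℕ) (hJ : J < M) (hJj0 : jf 0 ≤ J) :
    (1 / 2 * (c (jf 1) : ℝ) + β) +
      ∑ ℓ ∈ (Finset.Ico 1 Kn).filter (fun ℓ => jf ℓ ≤ J),
        1 / 2 * ((c (jf (ℓ + 1)) : ℝ) - (c (jf (ℓ - 1)) : ℝ))
    ≤ (c (J + 1) : ℝ) := by
  -- general monotonicity of c
  have hmono : ∀ a b, a ≤ b → b ≤ M → c a ≤ c b := by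
    intro a b hab hbM
    induction b with
    | zero => simp [Nat.le_zero.mp hab]
    | succ n ih =>
      rcases Nat.eq_or_lt_of_le hab with h | h
      · rw [h]
      · exact le_trans (ih (Nat.lt_succ_iff.mp h) (by omega)) (hcmono n (by omega))
  -- weak monotonicity of jf
  have hjle : ∀ ℓ ℓ', ℓ ≤ ℓ' → ℓ' < Kn → jf ℓ ≤ jf ℓ' := by
    intro ℓ ℓ' h h'
    rcases Nat.eq_or_lt_of_le h with rfl | h
    · exact le_rfl
    · exact (hjmono ℓ ℓ' h h').le
  -- the last jump index ≤ J
  have hSne : ((Finset.range Kn).filter (fun ℓ => jf ℓ ≤ J)).Nonempty :=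
    ⟨0, by simp only [Finset.mem_filter, Finset.mem_range]; exact ⟨hK, hJj0⟩⟩
  set m := ((Finset.range Kn).filter (fun ℓ => jf ℓ ≤ J)).max' hSne with hm
  have hmmem := Finset.max'_mem _ hSne
  rw [Finset.mem_filter, Finset.mem_range] at hmmem
  obtain ⟨hmK, hmJ⟩ := hmmem
  rw [← hm] at hmK hmJ
  have hmmax : ∀ ℓ, ℓ < Kn → jf ℓ ≤ J → ℓ ≤ m := by
    intro ℓ h1 h2
    exact Finset.le_max' _ ℓ (by simp [Finset.mem_filter, h1, h2])
  -- the filtered set is Ico 1 (m+1)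
  have hfilt : (Finset.Ico 1 Kn).filter (fun ℓ => jf ℓ ≤ J) = Finset.Ico 1 (m + 1) := by
    ext ℓ
    simp only [Finset.mem_filter, Finset.mem_Ico]
    constructor
    · rintro ⟨⟨h1, h2⟩, h3⟩
      exact ⟨h1, Nat.lt_succ_of_le (hmmax ℓ h2 h3)⟩
    · rintro ⟨h1, h2⟩
      have hlm : ℓ ≤ m := Nat.lt_succ_iff.mp h2
      exact ⟨⟨h1, lt_of_le_of_lt hlm hmK⟩, le_trans (hjle ℓ m hlm hmK) hmJ⟩
  -- telescoping
  set g : ℕ → ℝ := fun ℓ => (c (jf ℓ) : ℝ) with hg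
  have htel : ∀ n : ℕ, ∑ i ∈ Finset.range n,
      (1 / 2 * ((c (jf (1 + i + 1)) : ℝ) - (c (jf (1 + i - 1)) : ℝ)))
      = 1 / 2 * (g (n + 1) + g n - g 1 - g 0) := by
    intro n
    induction n with
    | zero => simp [hg]
    | succ n ih =>
      rw [Finset.sum_range_succ, ih]
      have h1 : 1 + n + 1 = n + 2 := by omega
      have h2 : 1 + n - 1 = n := by omega
      rw [h1, h2]
      show _ = 1 / 2 * (g (n + 1 + 1) + g (n + 1) - g 1 - g 0)
      have e1 : (n + 1 + 1) = n + 2 := by omega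
      rw [e1]
      simp only [hg]
      ring
  have hsum : ∑ ℓ ∈ (Finset.Ico 1 Kn).filter (fun ℓ => jf ℓ ≤ J),
        1 / 2 * ((c (jf (ℓ + 1)) : ℝ) - (c (jf (ℓ - 1)) : ℝ))
      = 1 / 2 * (g (m + 1) + g m - g 1 - g 0) := by
    rw [hfilt, Finset.sum_Ico_eq_sum_range]
    simpa using htel m
  -- b = jf (m+1)
  have hbM : jf (m + 1) ≤ M := by
    rcases Nat.eq_or_lt_of_le (Nat.succ_le_of_lt hmK) with h | h
    · have h' : m + 1 = Kn := h
      rw [h', hjlast]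
    · exact (hjjump (m + 1) h).1.le
  have hjmlt : jf m < jf (m + 1) := by
    rcases Nat.eq_or_lt_of_le (Nat.succ_le_of_lt hmK) with h | h
    · have h' : m + 1 = Kn := h
      rw [h', hjlast]; exact (hjjump m hmK).1
    · exact hjmono m (m + 1) (Nat.lt_succ_self m) h
  -- no jumps strictly between jf m and jf (m+1)
  have nojump : ∀ j, jf m < j → j < jf (m + 1) → ¬ c j < c (j + 1) := by
    intro j h1 h2 hjump
    obtain ⟨ℓ, hℓK, hℓj⟩ := hjall j (by omega) hjump
    have hℓgt : m < ℓ := by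
      by_contra h
      push_neg at h
      have := hjle ℓ m h hmK
      omega
    have : jf (m + 1) ≤ jf ℓ := hjle (m + 1) ℓ hℓgt hℓK
    omega
  -- c is constant on [jf m + 1, jf (m+1)]
  have ceq : ∀ d, jf m + 1 + d ≤ jf (m + 1) → c (jf m + 1 + d) = c (jf m + 1) := by
    intro d
    induction d with
    | zero => simp
    | succ n ih =>
      intro h
      have h1 : jf m + 1 + n < M := by omega
      have h2 := hcmono (jf m + 1 + n) h1
      have h3 := nojump (jf m + 1 + n) (by omega) (by omega)
      have h4 : c (jf m + 1 + n) = c (jf m + 1 + n + 1) := by omega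
      have : jf m + 1 + (n + 1) = jf m + 1 + n + 1 := by omega
      rw [this, ← h4, ih (by omega)]
  have hcb : c (jf (m + 1)) = c (jf m + 1) := by
    have := ceq (jf (m + 1) - (jf m + 1)) (by omega)
    rwa [show jf m + 1 + (jf (m + 1) - (jf m + 1)) = jf (m + 1) by omega] at this
  -- key bounds
  have hA : c (jf (m + 1)) ≤ c (J + 1) := by
    rw [hcb]
    exact hmono (jf m + 1) (J + 1) (by omega) (by omega)
  have hB : c (jf m) + 1 ≤ c (J + 1) := by
    have h1 : c (jf m) < c (jf m + 1) := (hjjump m hmK).2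
    have h2 : c (jf m + 1) ≤ c (J + 1) := hmono (jf m + 1) (J + 1) (by omega) (by omega)
    omega
  rw [hsum]
  have hA' : (c (jf (m + 1)) : ℝ) ≤ (c (J + 1) : ℝ) := by exact_mod_cast hA
  have hB' : (c (jf m) : ℝ) + 1 ≤ (c (J + 1) : ℝ) := by exact_mod_cast hB
  have hg0 : (0 : ℝ) ≤ g 0 := by simp [hg]
  simp only [hg]
  push_cast
  simp only [hg] at hA' hB' hg0
  push_cast at hA' hB' hg0
  linarith
end

section
/- With the combinatorial data and notation of the context, assume additionally that there is a real number β with 0 ≤ β < 1/2 and β_i ≤ β for every i ∈ {1,…,q}. Set ρ := r_{N̄−1} if z_{N̄} = 1, and ρ := 0 if z_{N̄} > 1. Then (the paper's Lemma 'betterthancreep', part 1): L ≤ ∑_{j=0}^{N̄} Z_j · r_j − (1/2 − β)·ρ. -/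
private lemma tele9 (r : ℕ → ℝ) : ∀ a b : ℕ, a ≤ b →
    ∑ m ∈ Finset.Ico a b, (r m - r (m + 1)) = r a - r b := by
  intro a b hab
  induction b, hab using Nat.le_induction with
  | base => simp
  | succ n hn ih => rw [Finset.sum_Ico_succ_top hn, ih]; ring

private lemma abel19 (u v : ℕ → ℝ) (b : ℝ) : ∀ K : ℕ, 1 ≤ K →
    ∑ ℓ ∈ Finset.range K, (b + 1 / 2 * (u (ℓ + 1) + u ℓ)) * (v ℓ - v (ℓ + 1))
      = (1 / 2 * u 1 + b + 1 / 2 * u 0) * v 0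
        + (∑ ℓ ∈ Finset.Ico 1 K, 1 / 2 * (u (ℓ + 1) - u (ℓ - 1)) * v ℓ)
        - (b + 1 / 2 * (u K + u (K - 1))) * v K := by
  intro K hK
  induction K, hK using Nat.le_induction with
  | base => simp [Finset.sum_range_succ]; ring
  | succ n hn ih =>
    rw [Finset.sum_range_succ, ih, Finset.sum_Ico_succ_top hn]
    have h1 : n + 1 - 1 = n := rfl
    rw [h1]
    ring

private lemma abel29 (a r : ℕ → ℝ) : ∀ n : ℕ,
    ∑ j ∈ Finset.range n, a j * r j
      = ∑ m ∈ Finset.range n, (∑ τ ∈ Finset.range (m + 1), a τ) * (r m - r (m + 1))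
        + (∑ τ ∈ Finset.range n, a τ) * r n := by
  intro n
  induction n with
  | zero => simp
  | succ n ih =>
    rw [Finset.sum_range_succ, ih, Finset.sum_range_succ (f := fun m =>
      (∑ τ ∈ Finset.range (m + 1), a τ) * (r m - r (m + 1))),
      Finset.sum_range_succ (f := a)]
    ring

/-- The paper's Lemma `betterthancreep`, part 1: with all marked-point weights
bounded by some `β < 1/2`, the bound of Lemma `creep` improves by
`(1/2 - β) ρ`. -/
theorem stmt9 (Nbar q g N : ℕ) (hNbar : 1 ≤ Nbar) (hq : 1 ≤ q) (hgN : g ≤ N)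
    (z : ℕ → ℕ) (hz : ∀ j ≤ Nbar, 1 ≤ z j)
    (r : ℕ → ℝ) (hrdec : ∀ j < Nbar, r (j + 1) < r j) (hrN : r Nbar = 0)
    (c : ℕ → Fin q → ℕ)
    (hc0 : ∀ i : Fin q, c 0 i = 0)
    (hcmono : ∀ j < Nbar, ∀ i : Fin q, c j i ≤ c (j + 1) i)
    (β : Fin q → ℝ) (hβ0 : ∀ i : Fin q, 0 ≤ β i) (hβh : ∀ i : Fin q, β i ≤ 1 / 2)
    (hRR : ∀ j, 1 ≤ j → j ≤ Nbar →
      ∑ τ ∈ Finset.range j, z τ ≤ N - g →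
      ∑ i : Fin q, c j i ≤ ∑ τ ∈ Finset.range j, z τ)
    (hCliff : ∀ j, 1 ≤ j → j ≤ Nbar →
      N - g < ∑ τ ∈ Finset.range j, z τ →
      ((∑ i : Fin q, c j i : ℕ) : ℤ) ≤
        2 * (∑ τ ∈ Finset.range j, (z τ : ℤ)) - ((N : ℤ) - (g : ℤ)))
    (jRR : ℕ) (hjRR1 : jRR ≤ Nbar)
    (hjRR2 : ∑ τ ∈ Finset.range jRR, z τ ≤ N - g)
    (hjRR3 : ∀ j ≤ Nbar, ∑ τ ∈ Finset.range j, z τ ≤ N - g → j ≤ jRR)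
    (K : Fin q → ℕ) (jf : Fin q → ℕ → ℕ)
    (henum : ∀ i : Fin q, 0 < c Nbar i →
      1 ≤ K i ∧
      jf i (K i) = Nbar ∧
      (∀ ℓ ℓ', ℓ < ℓ' → ℓ' < K i → jf i ℓ < jf i ℓ') ∧
      (∀ ℓ < K i, jf i ℓ < Nbar ∧ c (jf i ℓ) i < c (jf i ℓ + 1) i) ∧
      (∀ j < Nbar, c j i < c (j + 1) i → ∃ ℓ < K i, jf i ℓ = j))
    (βb : ℝ) (hβb0 : 0 ≤ βb) (hβblt : βb < 1 / 2)
    (hβle : ∀ i : Fin q, β i ≤ βb) :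
    (∑ i ∈ Finset.univ.filter (fun i : Fin q => 0 < c Nbar i),
      ((1 / 2 * (c (jf i 1) i : ℝ) + β i) * r (jf i 0) +
        ∑ ℓ ∈ Finset.Ico 1 (K i),
          1 / 2 * ((c (jf i (ℓ + 1)) i : ℝ) - (c (jf i (ℓ - 1)) i : ℝ)) * r (jf i ℓ)))
    ≤ (∑ j ∈ Finset.range (Nbar + 1),
        (if j < jRR then (z j : ℝ)
         else if j = jRR then
           (z j : ℝ) + ((∑ τ ∈ Finset.range (jRR + 1), (z τ : ℝ)) - ((N : ℝ) - (g : ℝ)))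
         else 2 * (z j : ℝ)) * r j)
      - (1 / 2 - βb) * (if z Nbar = 1 then r (Nbar - 1) else 0) := by
  classical
  set δ : ℝ := 1 / 2 - βb with hδdef
  have hδ0 : 0 ≤ δ := by simp only [hδdef]; linarith
  have hδ2 : δ ≤ 1 / 2 := by simp only [hδdef]; linarith
  set Zr : ℕ → ℝ := fun j =>
    if j < jRR then (z j : ℝ)
    else if j = jRR then
      (z j : ℝ) + ((∑ τ ∈ Finset.range (jRR + 1), (z τ : ℝ)) - ((N : ℝ) - (g : ℝ)))
    else 2 * (z j : ℝ) with hZrdef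
  -- global monotonicity of c
  have hcmono' : ∀ (i : Fin q) (a b : ℕ), a ≤ b → b ≤ Nbar → c a i ≤ c b i := by
    intro i a b hab hbN
    induction b, hab using Nat.le_induction with
    | base => exact le_rfl
    | succ n hn ih => exact le_trans (ih (by omega)) (hcmono n (by omega) i)
  -- r is antitone on [0, Nbar]
  have hrmono : ∀ a b : ℕ, a ≤ b → b ≤ Nbar → r b ≤ r a := by
    intro a b hab hbN
    induction b, hab using Nat.le_induction with
    | base => exact le_rfl
    | succ n hn ih => exact le_trans (le_of_lt (hrdec n (by omega))) (ih (by omega))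
  have hr0 : ∀ j ≤ Nbar, 0 ≤ r j := fun j hj => hrN ▸ hrmono j Nbar hj le_rfl
  set f : Fin q → ℕ → ℝ := fun i m =>
    (if 0 < c (m + 1) i then ((c (m + 1) i : ℝ) - δ) else 0) * (r m - r (m + 1)) with hfdef
  -- Step A : per-i bound
  have hstepA : ∀ i ∈ Finset.univ.filter (fun i : Fin q => 0 < c Nbar i),
      (1 / 2 * (c (jf i 1) i : ℝ) + β i) * r (jf i 0) +
        ∑ ℓ ∈ Finset.Ico 1 (K i),
          1 / 2 * ((c (jf i (ℓ + 1)) i : ℝ) - (c (jf i (ℓ - 1)) i : ℝ)) * r (jf i ℓ)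
      ≤ ∑ m ∈ Finset.range Nbar, f i m := by
    intro i hi
    rw [Finset.mem_filter] at hi
    obtain ⟨hK1, hKN, hmonoj, hjump, hcompl⟩ := henum i hi.2
    have hjfmono : ∀ ℓ ℓ', ℓ < ℓ' → ℓ' ≤ K i → jf i ℓ < jf i ℓ' := by
      intro ℓ ℓ' h1 h2
      rcases eq_or_lt_of_le h2 with h2 | h2
      · rw [h2, hKN]; exact (hjump ℓ (by omega)).1
      · exact hmonoj ℓ ℓ' h1 h2
    have hjfle : ∀ ℓ ≤ K i, jf i ℓ ≤ Nbar := by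
      intro ℓ hℓ
      rcases eq_or_lt_of_le hℓ with h | h
      · rw [h, hKN]
      · exact le_of_lt (hjump ℓ h).1
    have hczero : ∀ m ≤ jf i 0, c m i = 0 := by
      intro m
      induction m with
      | zero => intro _; exact hc0 i
      | succ n ih =>
        intro h
        have hn0 : c n i = 0 := ih (by omega)
        by_contra hne
        have hlt : c n i < c (n + 1) i := by omega
        have hnN : n < Nbar := lt_of_lt_of_le (by omega : n < jf i 0) (hjfle 0 (by omega))
        obtain ⟨ℓ', hℓ', hjeq⟩ := hcompl n hnN hlt
        have h2 : jf i 0 ≤ jf i ℓ' := by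
          rcases Nat.eq_zero_or_pos ℓ' with h3 | h3
          · rw [h3]
          · exact le_of_lt (hjfmono 0 ℓ' h3 (le_of_lt hℓ'))
        omega
    have hconst : ∀ ℓ < K i, ∀ m, jf i ℓ < m → m ≤ jf i (ℓ + 1) →
        c m i = c (jf i (ℓ + 1)) i := by
      intro ℓ hℓ
      have hℓ1 : ℓ + 1 ≤ K i := hℓ
      have key : ∀ m, jf i ℓ + 1 ≤ m → m ≤ jf i (ℓ + 1) → c m i = c (jf i ℓ + 1) i := by
        intro m hm
        induction m, hm using Nat.le_induction with
        | base => intro _; rfl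
        | succ n hn ih =>
          intro hn2
          have hc1 : c n i = c (jf i ℓ + 1) i := ih (by omega)
          have hnN : n < Nbar :=
            lt_of_lt_of_le (by omega : n < jf i (ℓ + 1)) (hjfle (ℓ + 1) hℓ1)
          by_contra hne
          have hle : c n i ≤ c (n + 1) i := hcmono n hnN i
          have hlt : c n i < c (n + 1) i := by omega
          obtain ⟨ℓ', hℓ'K, hjeq⟩ := hcompl n hnN hlt
          have h1 : ℓ < ℓ' := by
            by_contra h
            push_neg at h
            have : jf i ℓ' ≤ jf i ℓ := by
              rcases eq_or_lt_of_le h with h4 | h4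
              · rw [h4]
              · exact le_of_lt (hjfmono ℓ' ℓ h4 (le_of_lt hℓ))
            omega
          have h2 : jf i (ℓ + 1) ≤ jf i ℓ' := by
            rcases eq_or_lt_of_le (show ℓ + 1 ≤ ℓ' by omega) with h4 | h4
            · rw [h4]
            · exact le_of_lt (hjfmono (ℓ + 1) ℓ' h4 (le_of_lt hℓ'K))
          omega
      intro m hm hm2
      rw [key m hm hm2,
        key (jf i (ℓ + 1)) (hjfmono ℓ (ℓ + 1) (Nat.lt_succ_self ℓ) hℓ1) le_rfl]
    have hblock : ∀ ℓ < K i, ∑ m ∈ Finset.Ico (jf i ℓ) (jf i (ℓ + 1)), f i m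
        = ((c (jf i (ℓ + 1)) i : ℝ) - δ) * (r (jf i ℓ) - r (jf i (ℓ + 1))) := by
      intro ℓ hℓ
      have hℓ1 : ℓ + 1 ≤ K i := hℓ
      have hpos : 0 < c (jf i (ℓ + 1)) i := by
        have h1 := (hjump ℓ hℓ).2
        have h2 : c (jf i ℓ + 1) i = c (jf i (ℓ + 1)) i :=
          hconst ℓ hℓ (jf i ℓ + 1) (by omega) (hjfmono ℓ (ℓ + 1) (Nat.lt_succ_self ℓ) hℓ1)
        omega
      have h3 : ∀ m ∈ Finset.Ico (jf i ℓ) (jf i (ℓ + 1)),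
          f i m = ((c (jf i (ℓ + 1)) i : ℝ) - δ) * (r m - r (m + 1)) := by
        intro m hm
        rw [Finset.mem_Ico] at hm
        have h4 : c (m + 1) i = c (jf i (ℓ + 1)) i :=
          hconst ℓ hℓ (m + 1) (by omega) (by omega)
        simp only [hfdef, h4, if_pos hpos]
      rw [Finset.sum_congr rfl h3, ← Finset.mul_sum,
        tele9 r _ _ (le_of_lt (hjfmono ℓ (ℓ + 1) (Nat.lt_succ_self ℓ) hℓ1))]
    have hinit : ∑ m ∈ Finset.Ico 0 (jf i 0), f i m = 0 := by
      apply Finset.sum_eq_zero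
      intro m hm
      rw [Finset.mem_Ico] at hm
      have h4 : c (m + 1) i = 0 := hczero (m + 1) (by omega)
      simp [hfdef, h4]
    have hsplit : ∀ n, n ≤ K i → ∑ m ∈ Finset.Ico (jf i 0) (jf i n), f i m
        = ∑ ℓ ∈ Finset.range n, ((c (jf i (ℓ + 1)) i : ℝ) - δ) *
            (r (jf i ℓ) - r (jf i (ℓ + 1))) := by
      intro n
      induction n with
      | zero => intro _; simp
      | succ n ih =>
        intro hn
        have h1 : jf i 0 ≤ jf i n := by
          rcases Nat.eq_zero_or_pos n with h | h
          · rw [h]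
          · exact le_of_lt (hjfmono 0 n h (by omega))
        have h2 : jf i n ≤ jf i (n + 1) :=
          le_of_lt (hjfmono n (n + 1) (Nat.lt_succ_self n) hn)
        rw [← Finset.sum_Ico_consecutive _ h1 h2, ih (by omega), hblock n (by omega),
          Finset.sum_range_succ]
    have hFi : ∑ m ∈ Finset.range Nbar, f i m
        = ∑ ℓ ∈ Finset.range (K i), ((c (jf i (ℓ + 1)) i : ℝ) - δ) *
            (r (jf i ℓ) - r (jf i (ℓ + 1))) := by
      have hsp := hsplit (K i) le_rfl
      rw [hKN] at hsp
      conv_lhs => rw [Finset.range_eq_Ico, ← Finset.sum_Ico_consecutive _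
        (Nat.zero_le (jf i 0)) (hjfle 0 (by omega))]
      rw [hinit, zero_add, hsp]
    have hu0 : (c (jf i 0) i : ℝ) = 0 := by
      rw [hczero (jf i 0) le_rfl]; norm_num
    have hvK : r (jf i (K i)) = 0 := by rw [hKN, hrN]
    have hterm_eq : (1 / 2 * (c (jf i 1) i : ℝ) + β i) * r (jf i 0) +
        ∑ ℓ ∈ Finset.Ico 1 (K i),
          1 / 2 * ((c (jf i (ℓ + 1)) i : ℝ) - (c (jf i (ℓ - 1)) i : ℝ)) * r (jf i ℓ)
        = ∑ ℓ ∈ Finset.range (K i),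
            (β i + 1 / 2 * ((c (jf i (ℓ + 1)) i : ℝ) + (c (jf i ℓ) i : ℝ))) *
              (r (jf i ℓ) - r (jf i (ℓ + 1))) := by
      rw [abel19 (fun ℓ => (c (jf i ℓ) i : ℝ)) (fun ℓ => r (jf i ℓ)) (β i) (K i) hK1]
      simp only [hu0, hvK]
      ring
    rw [hterm_eq, hFi]
    apply Finset.sum_le_sum
    intro ℓ hℓ
    rw [Finset.mem_range] at hℓ
    have hℓ1 : ℓ + 1 ≤ K i := hℓ
    have h1 : c (jf i ℓ) i + 1 ≤ c (jf i (ℓ + 1)) i := by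
      have h2 := (hjump ℓ hℓ).2
      have h3 : c (jf i ℓ + 1) i ≤ c (jf i (ℓ + 1)) i :=
        hcmono' i _ _ (hjfmono ℓ (ℓ + 1) (Nat.lt_succ_self ℓ) hℓ1) (hjfle (ℓ + 1) hℓ1)
      omega
    have h2 : 0 ≤ r (jf i ℓ) - r (jf i (ℓ + 1)) :=
      sub_nonneg.2 (hrmono _ _ (le_of_lt (hjfmono ℓ (ℓ + 1) (Nat.lt_succ_self ℓ) hℓ1))
        (hjfle (ℓ + 1) hℓ1))
    apply mul_le_mul_of_nonneg_right _ h2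
    have h4 : (c (jf i ℓ) i : ℝ) + 1 ≤ (c (jf i (ℓ + 1)) i : ℝ) := by exact_mod_cast h1
    have h5 := hβle i
    simp only [hδdef]
    linarith
  -- Step B : sum over i, swap order
  have hswap : ∑ i ∈ Finset.univ.filter (fun i : Fin q => 0 < c Nbar i),
      ∑ m ∈ Finset.range Nbar, f i m
      = ∑ m ∈ Finset.range Nbar,
          (∑ i : Fin q, (if 0 < c (m + 1) i then ((c (m + 1) i : ℝ) - δ) else 0)) *
            (r m - r (m + 1)) := by
    rw [Finset.sum_comm]
    refine Finset.sum_congr rfl fun m hm => ?_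
    rw [Finset.mem_range] at hm
    have hext : ∑ i ∈ Finset.univ.filter (fun i : Fin q => 0 < c Nbar i), f i m
        = ∑ i : Fin q, f i m := by
      apply Finset.sum_subset (Finset.filter_subset _ _)
      intro i _ hnot
      rw [Finset.mem_filter] at hnot
      push_neg at hnot
      have h0 : c Nbar i = 0 := by
        have := hnot (Finset.mem_univ i); omega
      have h1 : c (m + 1) i = 0 := by
        have := hcmono' i (m + 1) Nbar (by omega) le_rfl
        omega
      simp [hfdef, h1]
    rw [hext, Finset.sum_mul]
  -- Step C : per-m coefficient bound
  have hCm : ∀ m ∈ Finset.range Nbar,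
      (∑ i : Fin q, (if 0 < c (m + 1) i then ((c (m + 1) i : ℝ) - δ) else 0))
        ≤ (∑ τ ∈ Finset.range (m + 1), Zr τ) - δ := by
    intro m hm
    rw [Finset.mem_range] at hm
    -- the bound C_{m+1} ≤ V_m and 1 ≤ V_m
    have hkey : ((∑ i : Fin q, c (m + 1) i : ℕ) : ℝ) ≤ ∑ τ ∈ Finset.range (m + 1), Zr τ ∧
        1 ≤ ∑ τ ∈ Finset.range (m + 1), Zr τ := by
      have hz1 : 1 ≤ z 0 := hz 0 (by omega)
      have hs1 : 1 ≤ ∑ τ ∈ Finset.range (m + 1), z τ := by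
        calc 1 ≤ z 0 := hz1
        _ ≤ ∑ τ ∈ Finset.range (m + 1), z τ := by
            exact Finset.single_le_sum (f := z) (fun τ _ => Nat.zero_le _)
              (Finset.mem_range.mpr (by omega))
      rcases lt_or_ge m jRR with hlt | hge
      · -- Riemann-Roch region
        have hVeq : ∑ τ ∈ Finset.range (m + 1), Zr τ
            = ∑ τ ∈ Finset.range (m + 1), (z τ : ℝ) := by
          refine Finset.sum_congr rfl fun τ hτ => ?_
          rw [Finset.mem_range] at hτ
          simp only [hZrdef]
          rw [if_pos (by omega)]
        have hsle : ∑ τ ∈ Finset.range (m + 1), z τ ≤ N - g := by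
          calc ∑ τ ∈ Finset.range (m + 1), z τ ≤ ∑ τ ∈ Finset.range jRR, z τ :=
            Finset.sum_le_sum_of_subset (Finset.range_subset_range.2 (by omega))
          _ ≤ N - g := hjRR2
        have hC := hRR (m + 1) (by omega) (by omega) hsle
        constructor
        · rw [hVeq]
          calc ((∑ i : Fin q, c (m + 1) i : ℕ) : ℝ)
              ≤ ((∑ τ ∈ Finset.range (m + 1), z τ : ℕ) : ℝ) := by exact_mod_cast hC
          _ = ∑ τ ∈ Finset.range (m + 1), (z τ : ℝ) := by push_cast; ring
        · rw [hVeq]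
          calc (1 : ℝ) ≤ ((∑ τ ∈ Finset.range (m + 1), z τ : ℕ) : ℝ) := by
                exact_mod_cast hs1
          _ = ∑ τ ∈ Finset.range (m + 1), (z τ : ℝ) := by push_cast; ring
      · -- Clifford region
        have hVeq : ∑ τ ∈ Finset.range (m + 1), Zr τ
            = 2 * (∑ τ ∈ Finset.range (m + 1), (z τ : ℝ)) - ((N : ℝ) - (g : ℝ)) := by
          have e0 : ∑ τ ∈ Finset.range (m + 1), Zr τ
              = ∑ τ ∈ Finset.range (jRR + 1), Zr τ
                + ∑ τ ∈ Finset.Ico (jRR + 1) (m + 1), Zr τ := by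
            conv_lhs => rw [Finset.range_eq_Ico]
            conv_rhs => rw [Finset.range_eq_Ico]
            exact (Finset.sum_Ico_consecutive Zr (Nat.zero_le _)
              (by omega : jRR + 1 ≤ m + 1)).symm
          have e1 : ∑ τ ∈ Finset.range (jRR + 1), Zr τ
              = (∑ τ ∈ Finset.range jRR, (z τ : ℝ)) +
                ((z jRR : ℝ) + ((∑ τ ∈ Finset.range (jRR + 1), (z τ : ℝ))
                  - ((N : ℝ) - (g : ℝ)))) := by
            rw [Finset.sum_range_succ]
            congr 1
            · refine Finset.sum_congr rfl fun τ hτ => ?_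
              rw [Finset.mem_range] at hτ
              simp only [hZrdef]
              rw [if_pos hτ]
            · simp [hZrdef]
          have e2 : ∑ τ ∈ Finset.Ico (jRR + 1) (m + 1), Zr τ
              = ∑ τ ∈ Finset.Ico (jRR + 1) (m + 1), 2 * (z τ : ℝ) := by
            refine Finset.sum_congr rfl fun τ hτ => ?_
            rw [Finset.mem_Ico] at hτ
            simp only [hZrdef]
            rw [if_neg (by omega), if_neg (by omega)]
          have e3 : ∑ τ ∈ Finset.Ico (jRR + 1) (m + 1), (z τ : ℝ)
              = (∑ τ ∈ Finset.range (m + 1), (z τ : ℝ))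
                - ∑ τ ∈ Finset.range (jRR + 1), (z τ : ℝ) := by
            rw [Finset.range_eq_Ico,
              ← Finset.sum_Ico_consecutive (fun τ => ((z τ : ℝ)))
                (Nat.zero_le (jRR + 1)) (by omega : jRR + 1 ≤ m + 1)]
            rw [← Finset.range_eq_Ico]
            ring
          have e4 : ∑ τ ∈ Finset.range (jRR + 1), (z τ : ℝ)
              = (∑ τ ∈ Finset.range jRR, (z τ : ℝ)) + (z jRR : ℝ) :=
            Finset.sum_range_succ _ _
          rw [e0, e1, e2, ← Finset.mul_sum, e3, e4]
          ring
        have hsgt : N - g < ∑ τ ∈ Finset.range (m + 1), z τ := by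
          by_contra h
          push_neg at h
          have := hjRR3 (m + 1) (by omega) h
          omega
        have hC := hCliff (m + 1) (by omega) (by omega) hsgt
        have hCR : ((∑ i : Fin q, c (m + 1) i : ℕ) : ℝ)
            ≤ 2 * (∑ τ ∈ Finset.range (m + 1), (z τ : ℝ)) - ((N : ℝ) - (g : ℝ)) := by
          exact_mod_cast hC
        have hsR : ((N : ℝ) - (g : ℝ)) + 1 ≤ ∑ τ ∈ Finset.range (m + 1), (z τ : ℝ) := by
          have h1 : N - g + 1 ≤ ∑ τ ∈ Finset.range (m + 1), z τ := hsgt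
          calc ((N : ℝ) - (g : ℝ)) + 1 = ((N - g + 1 : ℕ) : ℝ) := by
                rw [Nat.cast_add, Nat.cast_sub hgN, Nat.cast_one]
            _ ≤ ((∑ τ ∈ Finset.range (m + 1), z τ : ℕ) : ℝ) := by exact_mod_cast h1
            _ = ∑ τ ∈ Finset.range (m + 1), (z τ : ℝ) := by push_cast; ring
        have hsR1 : (1 : ℝ) ≤ ∑ τ ∈ Finset.range (m + 1), (z τ : ℝ) := by
          calc (1 : ℝ) ≤ ((∑ τ ∈ Finset.range (m + 1), z τ : ℕ) : ℝ) := by exact_mod_cast hs1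
          _ = ∑ τ ∈ Finset.range (m + 1), (z τ : ℝ) := by push_cast; ring
        rw [hVeq]
        constructor
        · exact hCR
        · linarith
      done
    obtain ⟨hCV, hV1⟩ := hkey
    by_cases hex : ∃ i₀ : Fin q, 0 < c (m + 1) i₀
    · obtain ⟨i₀, hi₀⟩ := hex
      have hbound : ∀ i : Fin q,
          (if 0 < c (m + 1) i then ((c (m + 1) i : ℝ) - δ) else 0)
            ≤ (c (m + 1) i : ℝ) - (if i = i₀ then δ else 0) := by
        intro i
        by_cases h : 0 < c (m + 1) i
        · rw [if_pos h]
          by_cases h' : i = i₀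
          · rw [if_pos h']
          · rw [if_neg h']; linarith
        · rw [if_neg h]
          by_cases h' : i = i₀
          · exact absurd (h' ▸ hi₀) h
          · rw [if_neg h']
            have : c (m + 1) i = 0 := by omega
            simp [this]
      calc ∑ i : Fin q, (if 0 < c (m + 1) i then ((c (m + 1) i : ℝ) - δ) else 0)
          ≤ ∑ i : Fin q, ((c (m + 1) i : ℝ) - (if i = i₀ then δ else 0)) :=
            Finset.sum_le_sum fun i _ => hbound i
        _ = (∑ i : Fin q, (c (m + 1) i : ℝ)) - δ := by
            rw [Finset.sum_sub_distrib, Finset.sum_ite_eq' Finset.univ i₀ (fun _ => δ)]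
            simp
        _ ≤ (∑ τ ∈ Finset.range (m + 1), Zr τ) - δ := by
            have : ((∑ i : Fin q, c (m + 1) i : ℕ) : ℝ) = ∑ i : Fin q, (c (m + 1) i : ℝ) := by
              push_cast; ring
            linarith [this ▸ hCV]
    · push_neg at hex
      have hT0 : ∑ i : Fin q, (if 0 < c (m + 1) i then ((c (m + 1) i : ℝ) - δ) else 0) = 0 := by
        apply Finset.sum_eq_zero
        intro i _
        rw [if_neg (by exact fun h => absurd h (by simpa using hex i))]
      rw [hT0]
      exact le_trans (by simp only [hδdef]; linarith : (0:ℝ) ≤ 1 - δ) (sub_le_sub_right hV1 δ)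
  -- assemble
  have hρ : (if z Nbar = 1 then r (Nbar - 1) else 0) ≤ r 0 := by
    split
    · exact hrmono 0 (Nbar - 1) (Nat.zero_le _) (by omega)
    · exact hr0 0 (by omega)
  have hmain : (∑ i ∈ Finset.univ.filter (fun i : Fin q => 0 < c Nbar i),
      ((1 / 2 * (c (jf i 1) i : ℝ) + β i) * r (jf i 0) +
        ∑ ℓ ∈ Finset.Ico 1 (K i),
          1 / 2 * ((c (jf i (ℓ + 1)) i : ℝ) - (c (jf i (ℓ - 1)) i : ℝ)) * r (jf i ℓ)))
      ≤ ∑ m ∈ Finset.range Nbar,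
          ((∑ τ ∈ Finset.range (m + 1), Zr τ) - δ) * (r m - r (m + 1)) := by
    calc _ ≤ ∑ i ∈ Finset.univ.filter (fun i : Fin q => 0 < c Nbar i),
        ∑ m ∈ Finset.range Nbar, f i m := Finset.sum_le_sum hstepA
      _ = ∑ m ∈ Finset.range Nbar,
          (∑ i : Fin q, (if 0 < c (m + 1) i then ((c (m + 1) i : ℝ) - δ) else 0)) *
            (r m - r (m + 1)) := hswap
      _ ≤ _ := by
          apply Finset.sum_le_sum
          intro m hm
          have hm' := Finset.mem_range.mp hm
          exact mul_le_mul_of_nonneg_right (hCm m hm)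
            (sub_nonneg.2 (le_of_lt (hrdec m hm')))
  have hfinal : ∑ m ∈ Finset.range Nbar,
      ((∑ τ ∈ Finset.range (m + 1), Zr τ) - δ) * (r m - r (m + 1))
      = (∑ j ∈ Finset.range (Nbar + 1), Zr j * r j) - δ * r 0 := by
    have h1 : ∑ m ∈ Finset.range Nbar,
        ((∑ τ ∈ Finset.range (m + 1), Zr τ) - δ) * (r m - r (m + 1))
        = (∑ m ∈ Finset.range Nbar,
            (∑ τ ∈ Finset.range (m + 1), Zr τ) * (r m - r (m + 1)))
          - δ * ∑ m ∈ Finset.range Nbar, (r m - r (m + 1)) := by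
      rw [Finset.mul_sum, ← Finset.sum_sub_distrib]
      refine Finset.sum_congr rfl fun m _ => by ring
    have htel : ∑ m ∈ Finset.range Nbar, (r m - r (m + 1)) = r 0 := by
      rw [Finset.range_eq_Ico, tele9 r 0 Nbar (Nat.zero_le _), hrN, sub_zero]
    rw [h1, htel]
    have h2 := abel29 Zr r Nbar
    rw [hrN, mul_zero, add_zero] at h2
    rw [← h2, Finset.sum_range_succ, hrN, mul_zero, add_zero]
  calc _ ≤ ∑ m ∈ Finset.range Nbar,
        ((∑ τ ∈ Finset.range (m + 1), Zr τ) - δ) * (r m - r (m + 1)) := hmain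
    _ = (∑ j ∈ Finset.range (Nbar + 1), Zr j * r j) - δ * r 0 := hfinal
    _ ≤ (∑ j ∈ Finset.range (Nbar + 1), Zr j * r j)
        - δ * (if z Nbar = 1 then r (Nbar - 1) else 0) := by
        have := mul_le_mul_of_nonneg_left hρ hδ0
        linarith
end

section
/- With the combinatorial data and notation of the context, assume additionally that β_i = 0 for every i ∈ {1,…,q}. Set ρ := r_{N̄−1} if z_{N̄} = 1, and ρ := 0 if z_{N̄} > 1. Then (the paper's Lemma 'betterthancreep', part 2): L ≤ ∑_{j=0}^{N̄} Z_j · r_j − (1/2)·ρ. -/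
/-- Abel summation. -/
lemma stmt10_abel (n : ℕ) (f g : ℕ → ℝ) (hf0 : f 0 = 0) (hgn : g n = 0) :
    ∑ j ∈ Finset.range n, (f (j+1) - f j) * g j
      = ∑ j ∈ Finset.range n, f (j+1) * (g j - g (j+1)) := by
  have h1 : ∑ j ∈ Finset.range n, f j * g j
      = ∑ j ∈ Finset.range n, f (j+1) * g (j+1) := by
    have e1 := Finset.sum_range_succ' (fun j => f j * g j) n
    have e2 := Finset.sum_range_succ (fun j => f j * g j) n
    rw [e2] at e1
    simp [hf0, hgn] at e1
    linarith [e1]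
  simp only [sub_mul, mul_sub, Finset.sum_sub_distrib]
  rw [h1]

/-- Key identity. -/
lemma stmt10_id (w ρ : ℕ → ℝ) (hw0 : w 0 = 0) (K : ℕ) :
    (∑ ℓ ∈ Finset.range (K+1), (w (ℓ+1) - w ℓ) * ρ ℓ)
      - (1/2 * w 1 * ρ 0 + ∑ ℓ ∈ Finset.Ico 1 (K+1),
          1/2 * (w (ℓ+1) - w (ℓ-1)) * ρ ℓ)
    = 1/2 * (w (K+1) - w K) * ρ K
      + 1/2 * ∑ ℓ ∈ Finset.range K, (w (ℓ+1) - w ℓ) * (ρ ℓ - ρ (ℓ+1)) := by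
  induction K with
  | zero => simp [hw0]; ring
  | succ K ih =>
    rw [Finset.sum_range_succ, Finset.sum_Ico_succ_top (by omega : 1 ≤ K+1),
      Finset.sum_range_succ (fun ℓ => (w (ℓ+1) - w ℓ) * (ρ ℓ - ρ (ℓ+1))) K]
    simp only [Nat.add_sub_cancel]
    linarith [ih]

/-- Key inequality. -/
lemma stmt10_key (K : ℕ) (hK : 1 ≤ K) (w ρ : ℕ → ℝ) (hw0 : w 0 = 0)
    (hwj : ∀ ℓ < K, w ℓ + 1 ≤ w (ℓ+1))
    (hρd : ∀ ℓ < K, ρ (ℓ+1) ≤ ρ ℓ)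
    (hρnn : ∀ ℓ < K, 0 ≤ ρ ℓ) :
    1/2 * w 1 * ρ 0 + ∑ ℓ ∈ Finset.Ico 1 K, 1/2 * (w (ℓ+1) - w (ℓ-1)) * ρ ℓ
      ≤ (∑ ℓ ∈ Finset.range K, (w (ℓ+1) - w ℓ) * ρ ℓ) - 1/2 * ρ (K-1) := by
  obtain ⟨K, rfl⟩ : ∃ K', K = K' + 1 := ⟨K - 1, by omega⟩
  have hid := stmt10_id w ρ hw0 K
  have h1 : 1 ≤ w (K+1) - w K := by have := hwj K (by omega); linarith
  have h2 : 0 ≤ ρ K := hρnn K (by omega)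
  have h3 : 0 ≤ ∑ ℓ ∈ Finset.range K, (w (ℓ+1) - w ℓ) * (ρ ℓ - ρ (ℓ+1)) := by
    apply Finset.sum_nonneg
    intro ℓ hℓ
    simp only [Finset.mem_range] at hℓ
    have := hwj ℓ (by omega)
    have := hρd ℓ (by omega)
    nlinarith
  have h4 : 1/2 * ρ K ≤ 1/2 * (w (K+1) - w K) * ρ K := by nlinarith
  simp only [Nat.add_sub_cancel]
  linarith

/-- The paper's Lemma `betterthancreep`, part 2: with no marked points
(`β_i = 0`), the bound of Lemma `creep` improves by `(1/2) ρ`. -/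
theorem stmt10 (Nbar q g N : ℕ) (hNbar : 1 ≤ Nbar) (hq : 1 ≤ q) (hgN : g ≤ N)
    (z : ℕ → ℕ) (hz : ∀ j ≤ Nbar, 1 ≤ z j)
    (r : ℕ → ℝ) (hrdec : ∀ j < Nbar, r (j + 1) < r j) (hrN : r Nbar = 0)
    (c : ℕ → Fin q → ℕ)
    (hc0 : ∀ i : Fin q, c 0 i = 0)
    (hcmono : ∀ j < Nbar, ∀ i : Fin q, c j i ≤ c (j + 1) i)
    (β : Fin q → ℝ) (hβ0 : ∀ i : Fin q, 0 ≤ β i) (hβh : ∀ i : Fin q, β i ≤ 1 / 2)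
    (hRR : ∀ j, 1 ≤ j → j ≤ Nbar →
      ∑ τ ∈ Finset.range j, z τ ≤ N - g →
      ∑ i : Fin q, c j i ≤ ∑ τ ∈ Finset.range j, z τ)
    (hCliff : ∀ j, 1 ≤ j → j ≤ Nbar →
      N - g < ∑ τ ∈ Finset.range j, z τ →
      ((∑ i : Fin q, c j i : ℕ) : ℤ) ≤
        2 * (∑ τ ∈ Finset.range j, (z τ : ℤ)) - ((N : ℤ) - (g : ℤ)))
    (jRR : ℕ) (hjRR1 : jRR ≤ Nbar)
    (hjRR2 : ∑ τ ∈ Finset.range jRR, z τ ≤ N - g)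
    (hjRR3 : ∀ j ≤ Nbar, ∑ τ ∈ Finset.range j, z τ ≤ N - g → j ≤ jRR)
    (K : Fin q → ℕ) (jf : Fin q → ℕ → ℕ)
    (henum : ∀ i : Fin q, 0 < c Nbar i →
      1 ≤ K i ∧
      jf i (K i) = Nbar ∧
      (∀ ℓ ℓ', ℓ < ℓ' → ℓ' < K i → jf i ℓ < jf i ℓ') ∧
      (∀ ℓ < K i, jf i ℓ < Nbar ∧ c (jf i ℓ) i < c (jf i ℓ + 1) i) ∧
      (∀ j < Nbar, c j i < c (j + 1) i → ∃ ℓ < K i, jf i ℓ = j))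
    (hβzero : ∀ i : Fin q, β i = 0) :
    (∑ i ∈ Finset.univ.filter (fun i : Fin q => 0 < c Nbar i),
      ((1 / 2 * (c (jf i 1) i : ℝ) + β i) * r (jf i 0) +
        ∑ ℓ ∈ Finset.Ico 1 (K i),
          1 / 2 * ((c (jf i (ℓ + 1)) i : ℝ) - (c (jf i (ℓ - 1)) i : ℝ)) * r (jf i ℓ)))
    ≤ (∑ j ∈ Finset.range (Nbar + 1),
        (if j < jRR then (z j : ℝ)
         else if j = jRR then
           (z j : ℝ) + ((∑ τ ∈ Finset.range (jRR + 1), (z τ : ℝ)) - ((N : ℝ) - (g : ℝ)))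
         else 2 * (z j : ℝ)) * r j)
      - (1 / 2) * (if z Nbar = 1 then r (Nbar - 1) else 0) := by
  -- notation
  set Zc : ℕ → ℝ := fun j =>
    (if j < jRR then (z j : ℝ)
     else if j = jRR then
       (z j : ℝ) + ((∑ τ ∈ Finset.range (jRR + 1), (z τ : ℝ)) - ((N : ℝ) - (g : ℝ)))
     else 2 * (z j : ℝ)) with hZc
  -- monotonicity of r
  have hrle0 : ∀ d a, a + d ≤ Nbar → r (a + d) ≤ r a := by
    intro d
    induction d with
    | zero => intro a _; simp
    | succ d ih =>
      intro a h
      have h1 : r (a + d + 1) ≤ r (a + d) := (hrdec (a + d) (by omega)).le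
      have h2 : r (a + d) ≤ r a := ih a (by omega)
      calc r (a + (d+1)) = r (a + d + 1) := by ring_nf
        _ ≤ r a := h1.trans h2
  have hrle : ∀ a b, a ≤ b → b ≤ Nbar → r b ≤ r a := by
    intro a b hab hb
    obtain ⟨d, rfl⟩ : ∃ d, b = a + d := ⟨b - a, by omega⟩
    exact hrle0 d a hb
  have hrnn : ∀ j ≤ Nbar, 0 ≤ r j := by
    intro j hj
    have := hrle j Nbar hj le_rfl
    rw [hrN] at this; exact this
  -- global monotonicity of c
  have hcm0 : ∀ i (d a : ℕ), a + d ≤ Nbar → c a i ≤ c (a + d) i := by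
    intro i d
    induction d with
    | zero => intro a _; simp
    | succ d ih =>
      intro a h
      have h1 : c (a + d) i ≤ c (a + d + 1) i := hcmono (a + d) (by omega) i
      have h2 : c a i ≤ c (a + d) i := ih a (by omega)
      calc c a i ≤ c (a + d) i := h2
        _ ≤ c (a + d + 1) i := h1
        _ = c (a + (d + 1)) i := by ring_nf
  have hcm : ∀ i (a b : ℕ), a ≤ b → b ≤ Nbar → c a i ≤ c b i := by
    intro i a b hab hb
    obtain ⟨d, rfl⟩ : ∃ d, b = a + d := ⟨b - a, by omega⟩
    exact hcm0 i d a hb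
  -- the bound function B
  set B : ℕ → ℝ := fun j =>
    if j ≤ jRR then (∑ τ ∈ Finset.range j, (z τ : ℝ))
    else 2 * (∑ τ ∈ Finset.range j, (z τ : ℝ)) - ((N : ℝ) - (g : ℝ)) with hBdef
  have hB0 : B 0 = 0 := by simp [hBdef]
  have hBdiff : ∀ j < Nbar, B (j + 1) - B j = Zc j := by
    intro j hj
    simp only [hBdef, hZc]
    rcases lt_trichotomy j jRR with h | h | h
    · rw [if_pos (by omega : j + 1 ≤ jRR), if_pos h.le, if_pos h,
        Finset.sum_range_succ]
      ring
    · subst h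
      rw [if_neg (by omega : ¬ j + 1 ≤ j), if_pos le_rfl, if_neg (lt_irrefl j),
        if_pos rfl, Finset.sum_range_succ]
      ring
    · rw [if_neg (by omega : ¬ j + 1 ≤ jRR), if_neg (by omega : ¬ j ≤ jRR),
        if_neg (by omega : ¬ j < jRR), if_neg (by omega : ¬ j = jRR),
        Finset.sum_range_succ]
      ring
  -- C_j ≤ B_j
  have hCB : ∀ j, 1 ≤ j → j ≤ Nbar → ((∑ i : Fin q, c j i : ℕ) : ℝ) ≤ B j := by
    intro j h1 hj
    by_cases hle : j ≤ jRR
    · have hsle : ∑ τ ∈ Finset.range j, z τ ≤ N - g :=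
        le_trans (Finset.sum_le_sum_of_subset (Finset.range_subset_range.2 hle)) hjRR2
      have hh := hRR j h1 hj hsle
      simp only [hBdef, if_pos hle]
      push_cast
      exact_mod_cast hh
    · have hgt : N - g < ∑ τ ∈ Finset.range j, z τ := by
        by_contra hcon
        push_neg at hcon
        exact hle (hjRR3 j hj hcon)
      have hZ := hCliff j h1 hj hgt
      simp only [hBdef, if_neg hle]
      have : ((∑ i : Fin q, c j i : ℕ) : ℝ)
          ≤ 2 * ((∑ τ ∈ Finset.range j, (z τ : ℤ) : ℤ) : ℝ) - ((N : ℝ) - (g : ℝ)) := by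
        exact_mod_cast hZ
      push_cast at this ⊢
      linarith
  -- slack at jRR
  have hslack : jRR < Nbar → ((N : ℝ) - (g : ℝ)) ≤ ∑ τ ∈ Finset.range (jRR + 1), (z τ : ℝ) := by
    intro hlt
    have h1 : ¬ (∑ τ ∈ Finset.range (jRR + 1), z τ ≤ N - g) := by
      intro hcon
      have := hjRR3 (jRR + 1) (by omega) hcon
      omega
    push_neg at h1
    have h2 : (N : ℝ) - (g : ℝ) = ((N - g : ℕ) : ℝ) := by
      rw [Nat.cast_sub hgN]
    rw [h2]
    have : ((N - g : ℕ) : ℝ) ≤ ((∑ τ ∈ Finset.range (jRR + 1), z τ : ℕ) : ℝ) := by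
      exact_mod_cast h1.le
    calc ((N - g : ℕ) : ℝ) ≤ ((∑ τ ∈ Finset.range (jRR + 1), z τ : ℕ) : ℝ) := this
      _ = ∑ τ ∈ Finset.range (jRR + 1), (z τ : ℝ) := by push_cast; rfl
  -- main claim
  have main :
      (∑ i ∈ Finset.univ.filter (fun i : Fin q => 0 < c Nbar i),
        ((1 / 2 * (c (jf i 1) i : ℝ) + β i) * r (jf i 0) +
          ∑ ℓ ∈ Finset.Ico 1 (K i),
            1 / 2 * ((c (jf i (ℓ + 1)) i : ℝ) - (c (jf i (ℓ - 1)) i : ℝ)) * r (jf i ℓ)))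
      ≤ (∑ j ∈ Finset.range Nbar, Zc j * r j) - 1 / 2 * r (Nbar - 1) := by
    -- per-i bound
    have hper : ∀ i ∈ Finset.univ.filter (fun i : Fin q => 0 < c Nbar i),
        (1 / 2 * (c (jf i 1) i : ℝ) + β i) * r (jf i 0) +
          ∑ ℓ ∈ Finset.Ico 1 (K i),
            1 / 2 * ((c (jf i (ℓ + 1)) i : ℝ) - (c (jf i (ℓ - 1)) i : ℝ)) * r (jf i ℓ)
        ≤ (∑ j ∈ Finset.range Nbar, ((c (j + 1) i : ℝ) - (c j i : ℝ)) * r j)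
            - 1 / 2 * r (Nbar - 1) := by
      intro i hi
      rw [Finset.mem_filter] at hi
      obtain ⟨hK1, hjfK, hjflt, hjump, hsurj⟩ := henum i hi.2
      have hjfN : ∀ ℓ ≤ K i, jf i ℓ ≤ Nbar := by
        intro ℓ h
        rcases eq_or_lt_of_le h with rfl | hlt
        · rw [hjfK]
        · exact (hjump ℓ hlt).1.le
      have hjfstrict : ∀ ℓ < K i, jf i ℓ < jf i (ℓ + 1) := by
        intro ℓ hℓ
        rcases Nat.lt_or_ge (ℓ + 1) (K i) with hlt | hge
        · exact hjflt ℓ (ℓ + 1) (by omega) hlt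
        · have heq : ℓ + 1 = K i := by omega
          rw [heq, hjfK]; exact (hjump ℓ hℓ).1
      have hjfmono : ∀ ℓ ℓ', ℓ ≤ ℓ' → ℓ' ≤ K i → jf i ℓ ≤ jf i ℓ' := by
        intro ℓ ℓ'
        induction ℓ' with
        | zero =>
          intro h _
          have : ℓ = 0 := by omega
          rw [this]
        | succ m ih =>
          intro h h'
          rcases Nat.lt_or_ge ℓ (m + 1) with hlt | hge
          · calc jf i ℓ ≤ jf i m := ih (by omega) (by omega)
              _ ≤ jf i (m + 1) := (hjfstrict m (by omega)).le
          · have : ℓ = m + 1 := by omega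
            rw [this]
      -- constancy of c away from jumps
      have hconst : ∀ a d, a + d ≤ Nbar →
          (∀ ℓ < K i, ¬ (a ≤ jf i ℓ ∧ jf i ℓ < a + d)) → c (a + d) i = c a i := by
        intro a d
        induction d with
        | zero => intro _ _; rfl
        | succ d ih =>
          intro hle hno
          have hstep : c (a + d) i = c (a + d + 1) i := by
            rcases lt_or_eq_of_le (hcmono (a + d) (by omega) i) with hlt | heq
            · obtain ⟨ℓ, hℓ, hjfeq⟩ := hsurj (a + d) (by omega) hlt
              exact absurd ⟨by omega, by omega⟩ (hno ℓ hℓ)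
            · exact heq
          have : c (a + (d + 1)) i = c (a + d) i := by
            rw [show a + (d + 1) = a + d + 1 by omega, ← hstep]
          rw [this]
          exact ih (by omega) (fun ℓ hℓ h => hno ℓ hℓ ⟨h.1, by omega⟩)
      have hw0 : c (jf i 0) i = 0 := by
        have hno : ∀ ℓ < K i, ¬ (0 ≤ jf i ℓ ∧ jf i ℓ < 0 + jf i 0) := by
          intro ℓ hℓ ⟨_, h2⟩
          have := hjfmono 0 ℓ (by omega) hℓ.le
          omega
        have := hconst 0 (jf i 0) (by simpa using hjfN 0 (by omega)) hno
        simpa [hc0 i] using this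
      have hblock : ∀ ℓ < K i, c (jf i (ℓ + 1)) i = c (jf i ℓ + 1) i := by
        intro ℓ hℓ
        have h1 : jf i ℓ + 1 ≤ jf i (ℓ + 1) := hjfstrict ℓ hℓ
        obtain ⟨d, hd⟩ : ∃ d, jf i (ℓ + 1) = (jf i ℓ + 1) + d := ⟨jf i (ℓ + 1) - (jf i ℓ + 1), by omega⟩
        rw [hd]
        apply hconst
        · rw [← hd]; exact hjfN (ℓ + 1) (by omega)
        · intro ℓ' hℓ' ⟨ha, hb⟩
          rcases le_or_gt ℓ' ℓ with h | h
          · have := hjfmono ℓ' ℓ h (by omega)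
            omega
          · have := hjfmono (ℓ + 1) ℓ' h (by omega)
            omega
      -- reindex the difference sum over jump positions
      have hre : ∑ j ∈ Finset.range Nbar, ((c (j + 1) i : ℝ) - (c j i : ℝ)) * r j
          = ∑ ℓ ∈ Finset.range (K i),
              ((c (jf i ℓ + 1) i : ℝ) - (c (jf i ℓ) i : ℝ)) * r (jf i ℓ) := by
        have hinj : ∀ x ∈ Finset.range (K i), ∀ y ∈ Finset.range (K i),
            jf i x = jf i y → x = y := by
          intro x hx y hy hxy
          rw [Finset.mem_range] at hx hy
          by_contra hne
          rcases Nat.lt_or_ge x y with h | h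
          · have := hjflt x y h hy; omega
          · have := hjflt y x (by omega) hx; omega
        have hsub : (Finset.range (K i)).image (jf i) ⊆ Finset.range Nbar := by
          intro j hj
          rw [Finset.mem_image] at hj
          obtain ⟨ℓ, hℓ, rfl⟩ := hj
          rw [Finset.mem_range] at hℓ ⊢
          exact (hjump ℓ hℓ).1
        have hzero : ∀ j ∈ Finset.range Nbar, j ∉ (Finset.range (K i)).image (jf i) →
            ((c (j + 1) i : ℝ) - (c j i : ℝ)) * r j = 0 := by
          intro j hj hnot
          rw [Finset.mem_range] at hj
          have heq : c (j + 1) i = c j i := by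
            rcases lt_or_eq_of_le (hcmono j hj i) with hlt | heq
            · obtain ⟨ℓ, hℓ, hjfeq⟩ := hsurj j hj hlt
              exact absurd (Finset.mem_image.2 ⟨ℓ, Finset.mem_range.2 hℓ, hjfeq⟩) hnot
            · exact heq.symm
          rw [heq]; ring
        calc ∑ j ∈ Finset.range Nbar, ((c (j + 1) i : ℝ) - (c j i : ℝ)) * r j
            = ∑ j ∈ (Finset.range (K i)).image (jf i),
                ((c (j + 1) i : ℝ) - (c j i : ℝ)) * r j :=
              (Finset.sum_subset hsub hzero).symm
          _ = ∑ ℓ ∈ Finset.range (K i),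
                ((c (jf i ℓ + 1) i : ℝ) - (c (jf i ℓ) i : ℝ)) * r (jf i ℓ) :=
              Finset.sum_image hinj
      -- apply key lemma
      have hkey := stmt10_key (K i) hK1 (fun ℓ => (c (jf i ℓ) i : ℝ))
        (fun ℓ => r (jf i ℓ)) (by simp [hw0])
        (by
          intro ℓ hℓ
          have h1 : c (jf i ℓ) i < c (jf i ℓ + 1) i := (hjump ℓ hℓ).2
          have h2 : c (jf i ℓ + 1) i = c (jf i (ℓ + 1)) i := (hblock ℓ hℓ).symm
          have h3 : c (jf i ℓ) i + 1 ≤ c (jf i (ℓ + 1)) i := by omega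
          show (c (jf i ℓ) i : ℝ) + 1 ≤ (c (jf i (ℓ + 1)) i : ℝ)
          exact_mod_cast h3)
        (by
          intro ℓ hℓ
          exact hrle (jf i ℓ) (jf i (ℓ + 1)) (hjfstrict ℓ hℓ).le (hjfN (ℓ + 1) (by omega)))
        (by
          intro ℓ hℓ
          exact hrnn (jf i ℓ) (hjfN ℓ hℓ.le))
      have hlastr : r (Nbar - 1) ≤ r (jf i (K i - 1)) := by
        apply hrle
        · have := (hjump (K i - 1) (by omega)).1
          omega
        · omega
      have hsumeq : ∑ ℓ ∈ Finset.range (K i),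
            ((c (jf i (ℓ + 1)) i : ℝ) - (c (jf i ℓ) i : ℝ)) * r (jf i ℓ)
          = ∑ ℓ ∈ Finset.range (K i),
            ((c (jf i ℓ + 1) i : ℝ) - (c (jf i ℓ) i : ℝ)) * r (jf i ℓ) := by
        apply Finset.sum_congr rfl
        intro ℓ hℓ
        rw [Finset.mem_range] at hℓ
        rw [hblock ℓ hℓ]
      rw [hβzero i, add_zero, hre, ← hsumeq]
      linarith [hkey]
    -- now combine
    rcases Finset.eq_empty_or_nonempty
        (Finset.univ.filter (fun i : Fin q => 0 < c Nbar i)) with hemp | hne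
    · rw [hemp, Finset.sum_empty]
      have hZnn : ∀ j ∈ Finset.range Nbar, 0 ≤ Zc j * r j := by
        intro j hj
        rw [Finset.mem_range] at hj
        have hr := hrnn j (by omega)
        apply mul_nonneg _ hr
        simp only [hZc]
        split_ifs with h1 h2
        · positivity
        · have h3 := hslack (by omega)
          have h4 : (0:ℝ) ≤ (z j : ℝ) := by positivity
          linarith
        · positivity
      have hzz' : (1:ℝ) ≤ (z (Nbar - 1) : ℝ) := by
        exact_mod_cast hz (Nbar - 1) (by omega)
      have hone : (1:ℝ) ≤ Zc (Nbar - 1) := by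
        simp only [hZc]
        split_ifs with h1 h2
        · exact hzz'
        · have h3 := hslack (by omega)
          linarith
        · linarith
      have hsingle : Zc (Nbar - 1) * r (Nbar - 1) ≤ ∑ j ∈ Finset.range Nbar, Zc j * r j :=
        Finset.single_le_sum hZnn (Finset.mem_range.2 (by omega))
      have hr := hrnn (Nbar - 1) (by omega)
      nlinarith [hsingle, hone, hr]
    · have step1 := Finset.sum_le_sum hper
      have step2 : ∑ i ∈ Finset.univ.filter (fun i : Fin q => 0 < c Nbar i),
            ((∑ j ∈ Finset.range Nbar, ((c (j + 1) i : ℝ) - (c j i : ℝ)) * r j)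
              - 1 / 2 * r (Nbar - 1))
          = (∑ i ∈ Finset.univ.filter (fun i : Fin q => 0 < c Nbar i),
              ∑ j ∈ Finset.range Nbar, ((c (j + 1) i : ℝ) - (c j i : ℝ)) * r j)
            - ((Finset.univ.filter (fun i : Fin q => 0 < c Nbar i)).card : ℝ)
              * (1 / 2 * r (Nbar - 1)) := by
        rw [Finset.sum_sub_distrib, Finset.sum_const, nsmul_eq_mul]
      have hcard : (1:ℝ) ≤ ((Finset.univ.filter (fun i : Fin q => 0 < c Nbar i)).card : ℝ) := by
        exact_mod_cast Finset.card_pos.2 hne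
      have hrlast := hrnn (Nbar - 1) (by omega)
      have step3 : (∑ i ∈ Finset.univ.filter (fun i : Fin q => 0 < c Nbar i),
            ∑ j ∈ Finset.range Nbar, ((c (j + 1) i : ℝ) - (c j i : ℝ)) * r j)
          = ∑ i : Fin q, ∑ j ∈ Finset.range Nbar, ((c (j + 1) i : ℝ) - (c j i : ℝ)) * r j := by
        apply Finset.sum_subset (Finset.filter_subset _ _)
        intro i _ hni
        simp only [Finset.mem_filter, Finset.mem_univ, true_and, not_lt,
          Nat.le_zero] at hni
        apply Finset.sum_eq_zero
        intro j hj
        rw [Finset.mem_range] at hj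
        have e1 : c j i = 0 := by
          have := hcm i j Nbar (by omega) le_rfl
          omega
        have e2 : c (j + 1) i = 0 := by
          have := hcm i (j + 1) Nbar (by omega) le_rfl
          omega
        rw [e1, e2]
        simp
      have step4 : (∑ i : Fin q, ∑ j ∈ Finset.range Nbar,
            ((c (j + 1) i : ℝ) - (c j i : ℝ)) * r j)
          = ∑ j ∈ Finset.range Nbar,
              (((∑ i : Fin q, c (j + 1) i : ℕ) : ℝ) - ((∑ i : Fin q, c j i : ℕ) : ℝ)) * r j := by
        rw [Finset.sum_comm]
        apply Finset.sum_congr rfl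
        intro j _
        rw [← Finset.sum_mul]
        congr 1
        rw [Finset.sum_sub_distrib]
        push_cast
        ring
      have step5 : ∑ j ∈ Finset.range Nbar,
            (((∑ i : Fin q, c (j + 1) i : ℕ) : ℝ) - ((∑ i : Fin q, c j i : ℕ) : ℝ)) * r j
          = ∑ j ∈ Finset.range Nbar,
              ((∑ i : Fin q, c (j + 1) i : ℕ) : ℝ) * (r j - r (j + 1)) :=
        stmt10_abel Nbar (fun j => ((∑ i : Fin q, c j i : ℕ) : ℝ)) r (by simp [hc0]) hrN
      have step6 : ∑ j ∈ Finset.range Nbar,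
            ((∑ i : Fin q, c (j + 1) i : ℕ) : ℝ) * (r j - r (j + 1))
          ≤ ∑ j ∈ Finset.range Nbar, B (j + 1) * (r j - r (j + 1)) := by
        apply Finset.sum_le_sum
        intro j hj
        rw [Finset.mem_range] at hj
        have h1 := hCB (j + 1) (by omega) (by omega)
        have h2 : 0 ≤ r j - r (j + 1) := by
          have := hrdec j hj
          linarith
        exact mul_le_mul_of_nonneg_right h1 h2
      have step7 : ∑ j ∈ Finset.range Nbar, (B (j + 1) - B j) * r j
          = ∑ j ∈ Finset.range Nbar, B (j + 1) * (r j - r (j + 1)) :=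
        stmt10_abel Nbar B r hB0 hrN
      have step8 : ∑ j ∈ Finset.range Nbar, (B (j + 1) - B j) * r j
          = ∑ j ∈ Finset.range Nbar, Zc j * r j := by
        apply Finset.sum_congr rfl
        intro j hj
        rw [Finset.mem_range] at hj
        rw [hBdiff j hj]
      calc (∑ i ∈ Finset.univ.filter (fun i : Fin q => 0 < c Nbar i),
          ((1 / 2 * (c (jf i 1) i : ℝ) + β i) * r (jf i 0) +
            ∑ ℓ ∈ Finset.Ico 1 (K i),
              1 / 2 * ((c (jf i (ℓ + 1)) i : ℝ) - (c (jf i (ℓ - 1)) i : ℝ)) * r (jf i ℓ)))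
          ≤ ∑ i ∈ Finset.univ.filter (fun i : Fin q => 0 < c Nbar i),
              ((∑ j ∈ Finset.range Nbar, ((c (j + 1) i : ℝ) - (c j i : ℝ)) * r j)
                - 1 / 2 * r (Nbar - 1)) := step1
        _ ≤ (∑ j ∈ Finset.range Nbar, Zc j * r j) - 1 / 2 * r (Nbar - 1) := by
            rw [step2, step3, step4, step5]
            have : 1 / 2 * r (Nbar - 1)
                ≤ ((Finset.univ.filter (fun i : Fin q => 0 < c Nbar i)).card : ℝ)
                  * (1 / 2 * r (Nbar - 1)) := by nlinarith
            rw [← step8, step7] at *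
            linarith [step6]
  -- final assembly
  have hsplit : ∑ j ∈ Finset.range (Nbar + 1), Zc j * r j
      = ∑ j ∈ Finset.range Nbar, Zc j * r j := by
    rw [Finset.sum_range_succ, hrN, mul_zero, add_zero]
  have hite : (1 / 2 : ℝ) * (if z Nbar = 1 then r (Nbar - 1) else 0) ≤ 1 / 2 * r (Nbar - 1) := by
    split_ifs
    · exact le_rfl
    · have := hrnn (Nbar - 1) (by omega); linarith
  calc _ ≤ (∑ j ∈ Finset.range Nbar, Zc j * r j) - 1 / 2 * r (Nbar - 1) := main
    _ ≤ _ := by rw [hsplit]; linarith [hite]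
end

section
/- Let N ≥ 1 and g ≥ 1 be integers with g ≤ N, and let r_0 ≥ r_1 ≥ ⋯ ≥ r_{N−1} ≥ r_N = 0 be nonnegative real numbers with ∑_{j=0}^{N−1} r_j = 1. Then r_{N−g+1} + r_{N−g+2} + ⋯ + r_N ≤ (g−1)/N. -/
/-- The paper's Lemma `Clifftailbound`: the sum of the last `g` normalized
weights is bounded by `(g - 1)/N`. -/
theorem stmt11 (N g : ℕ) (hN : 1 ≤ N) (hg : 1 ≤ g) (hgN : g ≤ N)
    (r : ℕ → ℝ)
    (hmono : ∀ j < N, r (j + 1) ≤ r j)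
    (hnonneg : ∀ j ≤ N, 0 ≤ r j)
    (hrN : r N = 0)
    (hsum : ∑ j ∈ Finset.range N, r j = 1) :
    ∑ j ∈ Finset.Icc (N - g + 1) N, r j ≤ ((g : ℝ) - 1) / N := by
  set m := N - g + 1 with hm
  have hmN : m ≤ N := by omega
  have key : ∀ j, j ≤ N → ∀ i, i ≤ j → r j ≤ r i := by
    intro j hj
    induction j with
    | zero =>
        intro i hi
        interval_cases i
        exact le_refl _
    | succ n ih =>
        intro i hi
        rcases Nat.lt_or_ge i (n + 1) with h | h
        · exact le_trans (hmono n (by omega)) (ih (by omega) i (by omega))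
        · have : i = n + 1 := by omega
          rw [this]
  -- tail sum equals sum over Ico m N
  have hT : ∑ j ∈ Finset.Icc m N, r j = ∑ j ∈ Finset.Ico m N, r j := by
    rw [← Finset.Ico_add_one_right_eq_Icc, Finset.sum_Ico_succ_top hmN, hrN, add_zero]
  -- tail bounded by (N - m) * r m
  have hTle : ∑ j ∈ Finset.Ico m N, r j ≤ ((N - m : ℕ) : ℝ) * r m := by
    calc ∑ j ∈ Finset.Ico m N, r j ≤ ∑ _j ∈ Finset.Ico m N, r m :=
          Finset.sum_le_sum (fun j hj => by
            have hj' := Finset.mem_Ico.mp hj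
            exact key j (by omega) m hj'.1)
      _ = ((N - m : ℕ) : ℝ) * r m := by
          rw [Finset.sum_const, Nat.card_Ico, nsmul_eq_mul]
  -- head bounded below by m * r m
  have hHge : ((m : ℕ) : ℝ) * r m ≤ ∑ j ∈ Finset.range m, r j := by
    calc ((m : ℕ) : ℝ) * r m = ∑ _j ∈ Finset.range m, r m := by
          rw [Finset.sum_const, Finset.card_range, nsmul_eq_mul]
      _ ≤ ∑ j ∈ Finset.range m, r j :=
          Finset.sum_le_sum (fun j hj => by
            have hj' := Finset.mem_range.mp hj
            exact key m hmN j (by omega))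
  -- split the total sum
  have hsplit : ∑ j ∈ Finset.range m, r j + ∑ j ∈ Finset.Ico m N, r j = 1 := by
    rw [Finset.range_eq_Ico] at hsum ⊢
    rw [Finset.sum_Ico_consecutive _ (Nat.zero_le m) hmN]
    exact hsum
  have hrm : 0 ≤ r m := hnonneg m hmN
  have hc1 : ((N - m : ℕ) : ℝ) = (g : ℝ) - 1 := by
    have h : N - m = g - 1 := by omega
    rw [h]
    push_cast [Nat.cast_sub hg]
    ring
  have hc2 : ((m : ℕ) : ℝ) = (N : ℝ) - g + 1 := by
    rw [hm]
    push_cast [Nat.cast_sub hgN]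
    ring
  have hNpos : (0 : ℝ) < N := by positivity
  rw [hT, le_div_iff₀ hNpos]
  rw [hc1] at hTle
  rw [hc2] at hHge
  nlinarith [mul_le_mul_of_nonneg_left hTle (by positivity : (0:ℝ) ≤ (N:ℝ)),
    mul_le_mul_of_nonneg_left hHge (sub_nonneg.mpr (by exact_mod_cast hg : (1:ℝ) ≤ g))]
end

section
/- Let g ≥ 2 and N be integers with N ≥ 2g − 2, let t be a real number with 0 ≤ t ≤ 1/2, and let r_0 ≥ r_1 ≥ ⋯ ≥ r_{N−1} ≥ r_N = 0 be nonnegative real numbers with ∑_{j=0}^{N−1} r_j = 1. Then (r_{N−g+1} + r_{N−g+2} + ⋯ + r_N) − t·r_{N−1} ≤ (g − 1 − t)/N. -/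
/-- The improved tail bound (inequality (ClifftailboundB)): the sum of the
last `g` normalized weights minus `t` times the next-to-last weight is at most
`(g - 1 - t)/N`. -/
theorem stmt12 (N g : ℕ) (hg : 2 ≤ g) (hN : 2 * g - 2 ≤ N)
    (t : ℝ) (ht0 : 0 ≤ t) (ht : t ≤ 1 / 2)
    (r : ℕ → ℝ)
    (hmono : ∀ j < N, r (j + 1) ≤ r j)
    (hnonneg : ∀ j ≤ N, 0 ≤ r j)
    (hrN : r N = 0)
    (hsum : ∑ j ∈ Finset.range N, r j = 1) :
    (∑ j ∈ Finset.Icc (N - g + 1) N, r j) - t * r (N - 1)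
      ≤ ((g : ℝ) - 1 - t) / N := by
  have hgN : g ≤ N := by omega
  obtain ⟨M, rfl⟩ : ∃ M, N = M + 1 := ⟨N - 1, by omega⟩
  simp only [Nat.add_sub_cancel] at *
  have hNpos : (0:ℝ) < (M:ℝ) + 1 := by positivity
  set d : ℕ → ℝ := fun h => r h - r (h + 1) with hd_def
  have hd0 : ∀ h ∈ Finset.range (M + 1), 0 ≤ d h := by
    intro h hh
    have := hmono h (Finset.mem_range.mp hh)
    simp only [hd_def]
    linarith
  -- telescoping
  have htel : ∀ j, j ≤ M + 1 → r j = ∑ h ∈ Finset.Ico j (M + 1), d h := by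
    intro j hj
    rw [Finset.sum_Ico_eq_sub _ hj, Finset.sum_range_sub' r, Finset.sum_range_sub' r, hrN]
    ring
  -- total sum identity
  have hswap1 : ∑ j ∈ Finset.range (M + 1), r j
      = ∑ h ∈ Finset.range (M + 1), ((h:ℝ) + 1) * d h := by
    calc ∑ j ∈ Finset.range (M + 1), r j
        = ∑ j ∈ Finset.range (M + 1), ∑ h ∈ Finset.Ico j (M + 1), d h :=
          Finset.sum_congr rfl fun j hj => htel j (le_of_lt (Finset.mem_range.mp hj))
      _ = ∑ h ∈ Finset.range (M + 1), ∑ _j ∈ Finset.range (h + 1), d h := by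
          apply Finset.sum_comm'
          intro j h
          simp only [Finset.mem_range, Finset.mem_Ico]
          omega
      _ = ∑ h ∈ Finset.range (M + 1), ((h:ℝ) + 1) * d h := by
          apply Finset.sum_congr rfl
          intro h _
          rw [Finset.sum_const, Finset.card_range, nsmul_eq_mul]
          push_cast; ring
  -- tail sum identity
  have htail : ∑ j ∈ Finset.Icc (M + 1 - g + 1) (M + 1), r j
      = ∑ h ∈ Finset.range (M + 1), ((h + 1 - (M + 1 - g + 1) : ℕ) : ℝ) * d h := by
    have hle : M + 1 - g + 1 ≤ M + 1 := by omega
    rw [← Finset.Ico_add_one_right_eq_Icc, Finset.sum_Ico_succ_top hle, hrN, add_zero]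
    calc ∑ j ∈ Finset.Ico (M + 1 - g + 1) (M + 1), r j
        = ∑ j ∈ Finset.Ico (M + 1 - g + 1) (M + 1), ∑ h ∈ Finset.Ico j (M + 1), d h :=
          Finset.sum_congr rfl fun j hj => htel j (le_of_lt (Finset.mem_Ico.mp hj).2)
      _ = ∑ h ∈ Finset.range (M + 1), ∑ _j ∈ Finset.Icc (M + 1 - g + 1) h, d h := by
          apply Finset.sum_comm'
          intro j h
          simp only [Finset.mem_range, Finset.mem_Ico, Finset.mem_Icc]
          omega
      _ = ∑ h ∈ Finset.range (M + 1), ((h + 1 - (M + 1 - g + 1) : ℕ) : ℝ) * d h := by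
          apply Finset.sum_congr rfl
          intro h _
          rw [Finset.sum_const, Nat.card_Icc, nsmul_eq_mul]
  have hrd : r M = d M := by
    simp only [hd_def, hrN, sub_zero]
  set c : ℝ := ((g:ℝ) - 1 - t) / ((M:ℝ) + 1) with hc_def
  have hcN : c * ((M:ℝ) + 1) = (g:ℝ) - 1 - t := by
    rw [hc_def, div_mul_cancel₀ _ hNpos.ne']
  have hgR : (2:ℝ) ≤ (g:ℝ) := by exact_mod_cast hg
  have hNR : 2 * (g:ℝ) - 2 ≤ (M:ℝ) + 1 := by
    have h1 : 2 * g ≤ M + 1 + 2 := by omega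
    have h2 : 2 * (g:ℝ) ≤ (M:ℝ) + 1 + 2 := by exact_mod_cast h1
    linarith
  -- coefficient bound for h < M
  have hcoef : ∀ h, h < M → ((h + 1 - (M + 1 - g + 1) : ℕ) : ℝ) ≤ c * ((h:ℝ) + 1) := by
    intro h hh
    have hhR : (h:ℝ) + 1 ≤ M := by exact_mod_cast (by omega : h + 1 ≤ M)
    rcases le_or_gt (h + 1) (M + 1 - g + 1) with hcase | hcase
    · have hz : h + 1 - (M + 1 - g + 1) = 0 := by omega
      rw [hz]
      push_cast
      have : 0 ≤ c := by
        apply div_nonneg _ hNpos.le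
        linarith
      positivity
    · have hNle : M + 1 ≤ h + g := by omega
      have hnat : h + 1 - (M + 1 - g + 1) = h + g - (M + 1) := by omega
      rw [hnat, Nat.cast_sub hNle]
      push_cast
      rw [hc_def, div_mul_eq_mul_div, le_div_iff₀ hNpos]
      nlinarith [mul_nonneg (by linarith : (0:ℝ) ≤ (M:ℝ) - 1 - h)
          (by linarith : (0:ℝ) ≤ (M:ℝ) + 1 - g + 1 + t),
        mul_nonneg hNpos.le (by linarith : (0:ℝ) ≤ 1/2 - t)]
  -- conclude
  have hlast : ((M + 1 - (M + 1 - g + 1) : ℕ) : ℝ) = (g:ℝ) - 1 := by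
    have he : M + 1 - (M + 1 - g + 1) = g - 1 := by omega
    rw [he, Nat.cast_sub (by omega)]
    simp
  rw [htail, hrd, Finset.sum_range_succ]
  have h1 : ∑ h ∈ Finset.range M, ((h + 1 - (M + 1 - g + 1) : ℕ) : ℝ) * d h
      ≤ ∑ h ∈ Finset.range M, c * ((h:ℝ) + 1) * d h :=
    Finset.sum_le_sum fun h hh =>
      mul_le_mul_of_nonneg_right (hcoef h (Finset.mem_range.mp hh))
        (hd0 h (Finset.mem_range.mpr (by have := Finset.mem_range.mp hh; omega)))
  have h2 : ((M + 1 - (M + 1 - g + 1) : ℕ) : ℝ) * d M - t * d M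
      = (c * ((M:ℝ) + 1)) * d M := by
    rw [hlast, hcN]; ring
  have h3 : ∑ h ∈ Finset.range M, c * ((h:ℝ) + 1) * d h + c * ((M:ℝ) + 1) * d M = c := by
    calc ∑ h ∈ Finset.range M, c * ((h:ℝ) + 1) * d h + c * ((M:ℝ) + 1) * d M
        = c * ∑ h ∈ Finset.range (M + 1), ((h:ℝ) + 1) * d h := by
          rw [Finset.mul_sum, Finset.sum_range_succ]
          congr 1
          · exact Finset.sum_congr rfl fun x _ => by ring
          · ring
      _ = c * 1 := by rw [← hswap1, hsum]
      _ = c := mul_one c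
  push_cast at h1 h2 ⊢
  rw [← hc_def]
  linarith
end
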